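/- arXiv:2308.12399 — 6 statements merged into one kernel-verified Lean document; each statement's English description precedes it below -/
import Mathlib

section
/- Let G be a graph, let L(G) be the set of loopless leaves of G (vertices of degree one without a loop), let ℓ ∈ L(G) with unique neighbour w, and let G' be the graph obtained from G by deleting all edges {w, v'} with v' ∈ N_G(w) (and discarding resulting isolated vertices). Then st_+(G) = st_+(G') + 2, and every optimal set-join cover 𝒞 of G contains a set-join {w} ∨ N, where N_G(w) ∩ L(G) ⊆ N ⊆ N_G(w). -/
open Matrix

/-- A finite simple undirected graph that allows loops: a symmetric adjacency
relation on the vertex type. -/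
structure LGraph (V : Type*) where
  /-- the adjacency relation; `Adj v v` means a loop at `v`. -/
  Adj : V → V → Prop
  /-- adjacency is symmetric -/
  symm : ∀ {u v : V}, Adj u v → Adj v u

namespace LGraph

variable {V W : Type*}

/-- `𝒞` is a set-join cover of `G`: all components are nonempty subsets of the
vertex set, and the union of the edge sets of the set-joins `K ∨ L` in `𝒞` is
exactly the edge set of `G`. A set-join is represented as an unordered pair
`s(K, L)` of subsets of the vertex set. -/
def IsSetJoinCover (G : LGraph V) (𝒞 : Set (Sym2 (Set V))) : Prop :=
  (∀ p ∈ 𝒞, ∀ K ∈ p, (K : Set V).Nonempty) ∧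
    ∀ u v : V, G.Adj u v ↔ ∃ p ∈ 𝒞, ∃ K L : Set V, p = s(K, L) ∧ u ∈ K ∧ v ∈ L

/-- The component set `V(𝒞)` of a set-join cover: all subsets of the vertex set
appearing as a component of some set-join in `𝒞`. -/
def comps (𝒞 : Set (Sym2 (Set V))) : Set (Set V) :=
  {K : Set V | ∃ p ∈ 𝒞, K ∈ p}

/-- The order `|𝒞|` of a set-join cover: the number of its components. -/
noncomputable def coverOrder (𝒞 : Set (Sym2 (Set V))) : ℕ :=
  (comps 𝒞).ncard

/-- The SNT-rank `st₊(G)` of a graph: the minimal order of a set-join cover of `G`. -/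
noncomputable def st (G : LGraph V) : ℕ :=
  sInf {k : ℕ | ∃ 𝒞 : Set (Sym2 (Set V)), G.IsSetJoinCover 𝒞 ∧ coverOrder 𝒞 = k}

/-- An optimal set-join cover (OSJ cover): a set-join cover of order `st₊(G)`. -/
def IsOptimalCover (G : LGraph V) (𝒞 : Set (Sym2 (Set V))) : Prop :=
  G.IsSetJoinCover 𝒞 ∧ coverOrder 𝒞 = G.st

/-- The graph `G(𝒞)` of a set-join cover: vertices are the components, and two
components `K`, `L` are adjacent iff the set-join `K ∨ L` belongs to `𝒞`. -/
def coverGraph (𝒞 : Set (Sym2 (Set V))) : LGraph (comps 𝒞) where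
  Adj K L := s((K : Set V), (L : Set V)) ∈ 𝒞
  symm := by
    intro K L h
    rwa [Sym2.eq_swap] at h

/-- The neighbourhood of a vertex (`v ∈ neighborSet v` iff `v` has a loop). -/
def neighborSet (G : LGraph V) (v : V) : Set V := {w | G.Adj v w}

/-- The induced subgraph on a set of vertices. -/
def induce (G : LGraph V) (S : Set V) : LGraph S where
  Adj a b := G.Adj (a : V) (b : V)
  symm := by intro a b h; exact G.symm h

/-- Adjacency for the disjoint union of two graphs. -/
def disjUnionAdj (G : LGraph V) (H : LGraph W) : V ⊕ W → V ⊕ W → Prop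
  | Sum.inl a, Sum.inl b => G.Adj a b
  | Sum.inr a, Sum.inr b => H.Adj a b
  | _, _ => False

/-- The disjoint union `G ∪ H` of two graphs. -/
def disjUnion (G : LGraph V) (H : LGraph W) : LGraph (V ⊕ W) where
  Adj := disjUnionAdj G H
  symm := by
    rintro (a | a) (b | b) h
    · exact G.symm h
    · exact h.elim
    · exact h.elim
    · exact H.symm h

/-- The graph with no edges on vertex type `V`. -/
def emptyGraph (V : Type*) : LGraph V where
  Adj _ _ := False
  symm := by intro u v h; exact h

/-- Adjacency for the join of a graph with a single looped vertex `none`. -/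
def joinK1ℓAdj (G : LGraph V) : Option V → Option V → Prop
  | some a, some b => G.Adj a b
  | _, _ => True

/-- The join `G ∨ K₁ˡ` of `G` with a single looped vertex (the vertex `none`). -/
def joinK1ℓ (G : LGraph V) : LGraph (Option V) where
  Adj := joinK1ℓAdj G
  symm := by
    rintro (_ | a) (_ | b) h
    · trivial
    · trivial
    · trivial
    · exact G.symm h

/-- The complete loopless graph `Kₙ` on `Fin n`. -/
def completeGraph (n : ℕ) : LGraph (Fin n) where
  Adj i j := i ≠ j
  symm := by intro i j h; exact h.symm

/-- The path `Pₙ` on `n` vertices (no loops). -/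
def pathGraph (n : ℕ) : LGraph (Fin n) where
  Adj i j := (i : ℕ) + 1 = (j : ℕ) ∨ (j : ℕ) + 1 = (i : ℕ)
  symm := by intro i j h; exact h.symm

/-- The cycle `Cₙ` on `n` vertices (no loops), for `n ≥ 3`. -/
def cycleGraph (n : ℕ) : LGraph (Fin n) where
  Adj i j := ((i : ℕ) + 1) % n = (j : ℕ) ∨ ((j : ℕ) + 1) % n = (i : ℕ)
  symm := by intro i j h; exact h.symm

/-- Adjacency for the generalised star: the centre is `none`, and `some ⟨i, j⟩`
is the vertex at distance `j + 1` from the centre on arm `i`. -/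
def genStarAdj (t : ℕ) (k : Fin t → ℕ) :
    Option ((i : Fin t) × Fin (k i)) → Option ((i : Fin t) × Fin (k i)) → Prop
  | none, none => False
  | none, some ⟨_, j⟩ => (j : ℕ) = 0
  | some ⟨_, j⟩, none => (j : ℕ) = 0
  | some ⟨i, j⟩, some ⟨i', j'⟩ => i = i' ∧ ((j : ℕ) + 1 = (j' : ℕ) ∨ (j' : ℕ) + 1 = (j : ℕ))

/-- The generalised star `star(k₁, …, k_t)` with central vertex `none` and `t`
arms, the `i`-th arm being a path with `k i` edges emanating from the centre. -/
def genStar (t : ℕ) (k : Fin t → ℕ) : LGraph (Option ((i : Fin t) × Fin (k i))) where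
  Adj := genStarAdj t k
  symm := by
    rintro (_ | ⟨i, j⟩) (_ | ⟨i', j'⟩) h
    · exact h.elim
    · exact h
    · exact h
    · exact ⟨h.1.symm, h.2.symm⟩

/-- A loopless leaf: a vertex with exactly one neighbour and no loop. -/
def LooplessLeaf (G : LGraph V) (v : V) : Prop :=
  ¬ G.Adj v v ∧ ∃ w : V, G.neighborSet v = {w}

/-- Delete from `G` all edges incident to the vertex `w`. -/
def deleteVertexEdges (G : LGraph V) (w : V) : LGraph V where
  Adj u v := G.Adj u v ∧ u ≠ w ∧ v ≠ w
  symm := by intro u v h; exact ⟨G.symm h.1, h.2.2, h.2.1⟩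

/-- A graph is twin-free if no two distinct vertices have the same neighbourhood. -/
def TwinFree (G : LGraph V) : Prop :=
  ∀ u v : V, G.neighborSet u = G.neighborSet v → u = v

/-- `G` has a unique optimal set-join cover. -/
def HasUniqueOptimalCover (G : LGraph V) : Prop :=
  ∃! 𝒞 : Set (Sym2 (Set V)), G.IsSetJoinCover 𝒞 ∧ coverOrder 𝒞 = G.st

/-- The cover graphs of two set-join covers are isomorphic. -/
def CoverGraphIso (𝒞 : Set (Sym2 (Set V))) (𝒟 : Set (Sym2 (Set W))) : Prop :=
  ∃ e : comps 𝒞 ≃ comps 𝒟,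
    ∀ K L : comps 𝒞, (coverGraph 𝒞).Adj K L ↔ (coverGraph 𝒟).Adj (e K) (e L)

/-- All optimal set-join covers of `G` have isomorphic cover graphs. -/
def HasUniqueOSJCoverGraph (G : LGraph V) : Prop :=
  ∀ 𝒞 𝒟 : Set (Sym2 (Set V)),
    G.IsOptimalCover 𝒞 → G.IsOptimalCover 𝒟 → CoverGraphIso 𝒞 𝒟

/-- Entrywise nonnegativity of a real matrix. -/
def EntrywiseNonneg {m n : Type*} (A : Matrix m n ℝ) : Prop :=
  ∀ i j, 0 ≤ A i j

/-- The SNT-rank `st₊(A)` of a matrix: the minimal `k` such that `A = B * C * Bᵀ`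
with `B` an entrywise nonnegative `n × k` matrix and `C` a symmetric entrywise
nonnegative `k × k` matrix. -/
noncomputable def stM {V : Type*} [Fintype V] (A : Matrix V V ℝ) : ℕ :=
  sInf {k : ℕ | ∃ B : Matrix V (Fin k) ℝ, ∃ C : Matrix (Fin k) (Fin k) ℝ,
    EntrywiseNonneg B ∧ C.IsSymm ∧ EntrywiseNonneg C ∧ A = B * C * Bᵀ}

/-- The SNT-rank `st₊(G)` of a graph defined via matrices: the minimum of
`st₊(A)` over all symmetric entrywise nonnegative matrices `A` whose pattern
graph is `G`. -/
noncomputable def stMGraph {V : Type*} [Fintype V] (G : LGraph V) : ℕ :=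
  sInf {k : ℕ | ∃ A : Matrix V V ℝ, A.IsSymm ∧ EntrywiseNonneg A ∧
    (∀ i j, G.Adj i j ↔ 0 < A i j) ∧ stM A = k}

/-- The loopy graph associated with a simple graph. -/
def _root_.SimpleGraph.toLGraph (G : SimpleGraph V) : LGraph V where
  Adj := G.Adj
  symm := by intro u v h; exact G.adj_symm h

/-- The edge star cover number `starc(G)` of a loopless simple graph: the minimal
number of stars (given by a centre and a nonempty set of leaves not containing
the centre) whose edge sets have union exactly `E(G)`. -/
noncomputable def starCoverNumber (G : SimpleGraph V) : ℕ :=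
  sInf {k : ℕ | ∃ f : Fin k → V × Set V,
    (∀ i, (f i).2.Nonempty ∧ (f i).1 ∉ (f i).2) ∧
    ∀ u v : V, G.Adj u v ↔
      ∃ i, (u = (f i).1 ∧ v ∈ (f i).2) ∨ (v = (f i).1 ∧ u ∈ (f i).2)}


section Aux

variable {V : Type*}

/-- Any edge covered by a member of a set-join cover is an edge. -/
lemma adj_of_cover {G : LGraph V} {𝒞 : Set (Sym2 (Set V))} (h : G.IsSetJoinCover 𝒞)
    {p : Sym2 (Set V)} (hp : p ∈ 𝒞) {K L : Set V} (hpeq : p = s(K, L)) {u v : V}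
    (hu : u ∈ K) (hv : v ∈ L) : G.Adj u v :=
  (h.2 u v).mpr ⟨p, hp, K, L, hpeq, hu, hv⟩

/-- The trivial cover by single edges, yielding nonemptiness of the defining set of `st`. -/
lemma exists_cover (G : LGraph V) :
    {k : ℕ | ∃ 𝒞 : Set (Sym2 (Set V)), G.IsSetJoinCover 𝒞 ∧ coverOrder 𝒞 = k}.Nonempty := by
  refine ⟨_, {p | ∃ u v : V, G.Adj u v ∧ p = s(({u} : Set V), ({v} : Set V))}, ⟨?_, ?_⟩, rfl⟩
  · rintro p ⟨u, v, hadj, rfl⟩ K hK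
    rcases Sym2.mem_iff.mp hK with rfl | rfl
    · exact ⟨u, rfl⟩
    · exact ⟨v, rfl⟩
  · intro u v
    constructor
    · intro h
      exact ⟨_, ⟨u, v, h, rfl⟩, {u}, {v}, rfl, rfl, rfl⟩
    · rintro ⟨p, ⟨a, b, hab, rfl⟩, K, L, heq, huK, hvL⟩
      rcases Sym2.eq_iff.mp heq.symm with ⟨rfl, rfl⟩ | ⟨rfl, rfl⟩
      · rwa [Set.mem_singleton_iff.mp huK, Set.mem_singleton_iff.mp hvL]
      · rw [Set.mem_singleton_iff.mp huK, Set.mem_singleton_iff.mp hvL]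
        exact G.symm hab

/-- There is an optimal set-join cover. -/
lemma exists_optimal_cover (G : LGraph V) :
    ∃ 𝒞 : Set (Sym2 (Set V)), G.IsOptimalCover 𝒞 := by
  have h := Nat.sInf_mem (exists_cover G)
  obtain ⟨𝒞, h1, h2⟩ := h
  exact ⟨𝒞, h1, h2⟩

lemma st_le_coverOrder {G : LGraph V} {𝒞 : Set (Sym2 (Set V))} (h : G.IsSetJoinCover 𝒞) :
    G.st ≤ coverOrder 𝒞 :=
  Nat.sInf_le ⟨𝒞, h, rfl⟩

/-- If `v ∈ K` for a component `K`, and `v` has unique neighbour `w`, then any set-join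
containing the component `K` is `s(K, {w})`. -/
lemma join_eq_of_leaf_mem {G : LGraph V} {𝒞 : Set (Sym2 (Set V))} (h𝒞 : G.IsSetJoinCover 𝒞)
    {v w : V} (hv : G.neighborSet v = {w}) {K : Set V} (hvK : v ∈ K)
    {p : Sym2 (Set V)} (hp : p ∈ 𝒞) (hKp : K ∈ p) : p = s(K, ({w} : Set V)) := by
  obtain ⟨B, rfl⟩ := Sym2.mem_iff_exists.mp hKp
  obtain ⟨b, hb⟩ := h𝒞.1 _ hp B (Sym2.mem_iff.mpr (Or.inr rfl))
  have hBsub : B ⊆ {w} := by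
    intro x hx
    have : G.Adj v x := adj_of_cover h𝒞 hp rfl hvK hx
    rw [← hv]; exact this
  have hB : B = {w} := by
    refine subset_antisymm hBsub ?_
    have hbw : b = w := hBsub hb
    intro x hx
    rw [Set.mem_singleton_iff.mp hx, ← hbw]; exact hb
  rw [hB]

/-- Every vertex with unique neighbour `w` lies in a component `K ⊆ N(w)`
paired with `{w}`. -/
lemma exists_leaf_join {G : LGraph V} {𝒞 : Set (Sym2 (Set V))} (h𝒞 : G.IsSetJoinCover 𝒞)
    {v w : V} (hv : G.neighborSet v = {w}) :
    ∃ K : Set V, v ∈ K ∧ K ⊆ G.neighborSet w ∧ s(K, ({w} : Set V)) ∈ 𝒞 := by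
  have hadj : G.Adj v w := by rw [show G.Adj v w ↔ w ∈ G.neighborSet v from Iff.rfl, hv]; rfl
  obtain ⟨p, hp, K, L, hpeq, hvK, hwL⟩ := (h𝒞.2 v w).mp hadj
  have hKp : K ∈ p := by rw [hpeq]; exact Sym2.mem_iff.mpr (Or.inl rfl)
  have := join_eq_of_leaf_mem h𝒞 hv hvK hp hKp
  refine ⟨K, hvK, ?_, by rwa [this] at hp⟩
  intro u hu
  have : G.Adj u w := adj_of_cover h𝒞 hp (this ▸ rfl : p = s(K, ({w} : Set V))) hu rfl
  exact G.symm this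

/-- In an optimal cover, the components containing leaf-neighbours of `w` (paired with
`{w}`) coincide. -/
lemma leaf_comp_unique [Finite V] {G : LGraph V} {𝒞 : Set (Sym2 (Set V))}
    (hopt : G.IsOptimalCover 𝒞) {w v₁ v₂ : V} {K₁ K₂ : Set V}
    (hv₁ : G.neighborSet v₁ = {w}) (hv₂ : G.neighborSet v₂ = {w})
    (h1 : v₁ ∈ K₁) (h2 : v₂ ∈ K₂) (hw1 : v₁ ≠ w) (hw2 : v₂ ≠ w)
    (hK₁ : s(K₁, ({w} : Set V)) ∈ 𝒞) (hK₂ : s(K₂, ({w} : Set V)) ∈ 𝒞) : K₁ = K₂ := by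
  obtain ⟨h𝒞, hord⟩ := hopt
  by_contra hne
  -- the merged cover
  have hcov : G.IsSetJoinCover
      (insert s(({w} : Set V), K₁ ∪ K₂)
        (𝒞 \ {s(K₁, ({w} : Set V)), s(K₂, ({w} : Set V))})) := by
    constructor
    · rintro p (rfl | ⟨hp, -⟩) K hK
      · rcases Sym2.mem_iff.mp hK with rfl | rfl
        · exact ⟨w, rfl⟩
        · exact ⟨v₁, Or.inl h1⟩
      · exact h𝒞.1 p hp K hK
    · intro u v
      constructor
      · intro h
        obtain ⟨p, hp, K, L, hpeq, huK, hvL⟩ := (h𝒞.2 u v).mp h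
        by_cases hmem : p ∈ ({s(K₁, ({w} : Set V)), s(K₂, ({w} : Set V))} : Set (Sym2 (Set V)))
        · -- covered by a removed join: recover via the merged join
          have hc : (K = K₁ ∧ L = {w}) ∨ (K = {w} ∧ L = K₁) ∨
              (K = K₂ ∧ L = {w}) ∨ (K = {w} ∧ L = K₂) := by
            rcases hmem with rfl | rfl
            · rcases Sym2.eq_iff.mp hpeq with ⟨h1', h2'⟩ | ⟨h1', h2'⟩
              · exact Or.inl ⟨h1'.symm, h2'.symm⟩
              · exact Or.inr (Or.inl ⟨h2'.symm, h1'.symm⟩)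
            · rcases Sym2.eq_iff.mp hpeq with ⟨h1', h2'⟩ | ⟨h1', h2'⟩
              · exact Or.inr (Or.inr (Or.inl ⟨h1'.symm, h2'.symm⟩))
              · exact Or.inr (Or.inr (Or.inr ⟨h2'.symm, h1'.symm⟩))
          rcases hc with ⟨hKe, hLe⟩ | ⟨hKe, hLe⟩ | ⟨hKe, hLe⟩ | ⟨hKe, hLe⟩
          · refine ⟨_, Or.inl rfl, K₁ ∪ K₂, {w}, Sym2.eq_swap, Or.inl ?_, ?_⟩
            · rw [← hKe]; exact huK
            · rw [← hLe]; exact hvL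
          · refine ⟨_, Or.inl rfl, {w}, K₁ ∪ K₂, rfl, ?_, Or.inl ?_⟩
            · rw [← hKe]; exact huK
            · rw [← hLe]; exact hvL
          · refine ⟨_, Or.inl rfl, K₁ ∪ K₂, {w}, Sym2.eq_swap, Or.inr ?_, ?_⟩
            · rw [← hKe]; exact huK
            · rw [← hLe]; exact hvL
          · refine ⟨_, Or.inl rfl, {w}, K₁ ∪ K₂, rfl, ?_, Or.inr ?_⟩
            · rw [← hKe]; exact huK
            · rw [← hLe]; exact hvL
        · exact ⟨p, Or.inr ⟨hp, hmem⟩, K, L, hpeq, huK, hvL⟩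
      · rintro ⟨p, (rfl | ⟨hp, -⟩), K, L, hpeq, huK, hvL⟩
        · rcases Sym2.eq_iff.mp hpeq with ⟨hK, hL⟩ | ⟨hK, hL⟩
          · rw [← hK] at huK; rw [← hL] at hvL
            rw [Set.mem_singleton_iff.mp huK]
            rcases hvL with hv1 | hv2
            · exact G.symm (adj_of_cover h𝒞 hK₁ rfl hv1 rfl)
            · exact G.symm (adj_of_cover h𝒞 hK₂ rfl hv2 rfl)
          · rw [← hK] at hvL; rw [← hL] at huK
            rw [Set.mem_singleton_iff.mp hvL]
            rcases huK with hu1 | hu2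
            · exact adj_of_cover h𝒞 hK₁ rfl hu1 rfl
            · exact adj_of_cover h𝒞 hK₂ rfl hu2 rfl
        · exact adj_of_cover h𝒞 hp hpeq huK hvL
  -- counting
  have hK₁c : K₁ ∈ comps 𝒞 := ⟨_, hK₁, Sym2.mem_iff.mpr (Or.inl rfl)⟩
  have hK₂c : K₂ ∈ comps 𝒞 := ⟨_, hK₂, Sym2.mem_iff.mpr (Or.inl rfl)⟩
  have hwc : ({w} : Set V) ∈ comps 𝒞 := ⟨_, hK₁, Sym2.mem_iff.mpr (Or.inr rfl)⟩
  have hwK₁ : ({w} : Set V) ≠ K₁ := fun h => hw1 (by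
    have : v₁ ∈ ({w} : Set V) := h ▸ h1
    exact (Set.mem_singleton_iff.mp this))
  have hwK₂ : ({w} : Set V) ≠ K₂ := fun h => hw2 (by
    have : v₂ ∈ ({w} : Set V) := h ▸ h2
    exact (Set.mem_singleton_iff.mp this))
  have hsub : comps (insert s(({w} : Set V), K₁ ∪ K₂) (𝒞 \ {s(K₁, ({w} : Set V)), s(K₂, ({w} : Set V))})) ⊆ insert (K₁ ∪ K₂) (comps 𝒞 \ {K₁, K₂}) := by
    rintro A ⟨p, (rfl | ⟨hp, hpne⟩), hA⟩
    · rcases Sym2.mem_iff.mp hA with rfl | rfl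
      · exact Or.inr ⟨hwc, by simp [hwK₁, hwK₂]⟩
      · exact Or.inl rfl
    · refine Or.inr ⟨⟨p, hp, hA⟩, ?_⟩
      rintro (rfl | rfl)
      · exact hpne (Or.inl (join_eq_of_leaf_mem h𝒞 hv₁ h1 hp hA))
      · exact hpne (Or.inr (join_eq_of_leaf_mem h𝒞 hv₂ h2 hp hA))
  have hpairsub : ({K₁, K₂} : Set (Set V)) ⊆ comps 𝒞 := by
    rintro A (rfl | rfl); exacts [hK₁c, hK₂c]
  have hk2 : 2 ≤ (comps 𝒞).ncard := by
    calc 2 = ({K₁, K₂} : Set (Set V)).ncard := (Set.ncard_pair hne).symm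
    _ ≤ (comps 𝒞).ncard := Set.ncard_le_ncard hpairsub (Set.toFinite _)
  have hdiff : (comps 𝒞 \ {K₁, K₂}).ncard = (comps 𝒞).ncard - 2 := by
    rw [Set.ncard_diff hpairsub (Set.toFinite _), Set.ncard_pair hne]
  have hlt : coverOrder (insert s(({w} : Set V), K₁ ∪ K₂) (𝒞 \ {s(K₁, ({w} : Set V)), s(K₂, ({w} : Set V))})) < coverOrder 𝒞 := by
    have h1' : coverOrder (insert s(({w} : Set V), K₁ ∪ K₂) (𝒞 \ {s(K₁, ({w} : Set V)), s(K₂, ({w} : Set V))})) ≤ (insert (K₁ ∪ K₂) (comps 𝒞 \ {K₁, K₂})).ncard :=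
      Set.ncard_le_ncard hsub (Set.toFinite _)
    have h2' := Set.ncard_insert_le (K₁ ∪ K₂) (comps 𝒞 \ {K₁, K₂})
    unfold coverOrder at h1' ⊢
    omega
  have := st_le_coverOrder hcov
  omega

/-- Upper bound: `st₊(G) ≤ st₊(G') + 2`. -/
lemma st_le_aux {V : Type*} [Finite V] {G : LGraph V} {ℓ w : V} (hadj : G.Adj ℓ w) :
    G.st ≤ (deleteVertexEdges G w).st + 2 := by
  obtain ⟨𝒟, h𝒟, hord⟩ := exists_optimal_cover (deleteVertexEdges G w)
  have hcov : G.IsSetJoinCover (insert s(({w} : Set V), G.neighborSet w) 𝒟) := by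
    constructor
    · rintro p (rfl | hp) K hK
      · rcases Sym2.mem_iff.mp hK with rfl | rfl
        · exact ⟨w, rfl⟩
        · exact ⟨ℓ, G.symm hadj⟩
      · exact h𝒟.1 p hp K hK
    · intro u v
      constructor
      · intro h
        by_cases hu : u = w
        · exact ⟨_, Or.inl rfl, {w}, G.neighborSet w, rfl, by rw [hu]; rfl,
            by rw [← hu]; exact h⟩
        · by_cases hv : v = w
          · refine ⟨_, Or.inl rfl, G.neighborSet w, {w}, Sym2.eq_swap, ?_, ?_⟩
            · rw [hv] at h; exact G.symm h
            · rw [hv]; rfl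
          · obtain ⟨p, hp, K, L, hpeq, huK, hvL⟩ := (h𝒟.2 u v).mp ⟨h, hu, hv⟩
            exact ⟨p, Or.inr hp, K, L, hpeq, huK, hvL⟩
      · rintro ⟨p, (rfl | hp), K, L, hpeq, huK, hvL⟩
        · rcases Sym2.eq_iff.mp hpeq with ⟨hK, hL⟩ | ⟨hK, hL⟩
          · rw [← hK] at huK; rw [← hL] at hvL
            rw [Set.mem_singleton_iff.mp huK]
            exact hvL
          · rw [← hK] at hvL; rw [← hL] at huK
            rw [Set.mem_singleton_iff.mp hvL]
            exact G.symm huK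
        · exact ((h𝒟.2 u v).mpr ⟨p, hp, K, L, hpeq, huK, hvL⟩).1
  have hsub : comps (insert s(({w} : Set V), G.neighborSet w) 𝒟) ⊆
      insert {w} (insert (G.neighborSet w) (comps 𝒟)) := by
    rintro A ⟨p, (rfl | hp), hA⟩
    · rcases Sym2.mem_iff.mp hA with rfl | rfl
      · exact Or.inl rfl
      · exact Or.inr (Or.inl rfl)
    · exact Or.inr (Or.inr ⟨p, hp, hA⟩)
  have hle := st_le_coverOrder hcov
  have h1 : coverOrder (insert s(({w} : Set V), G.neighborSet w) 𝒟) ≤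
      (insert ({w} : Set V) (insert (G.neighborSet w) (comps 𝒟))).ncard :=
    Set.ncard_le_ncard hsub (Set.toFinite _)
  have h2 := Set.ncard_insert_le ({w} : Set V) (insert (G.neighborSet w) (comps 𝒟))
  have h3 := Set.ncard_insert_le (G.neighborSet w) (comps 𝒟)
  unfold coverOrder at *
  omega

/-- Lower bound: `st₊(G') + 2 ≤ st₊(G)`. -/
lemma st_ge_aux {V : Type*} [Finite V] {G : LGraph V} {ℓ w : V}
    (hℓ : G.neighborSet ℓ = {w}) (hlw : ℓ ≠ w) :
    (deleteVertexEdges G w).st + 2 ≤ G.st := by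
  obtain ⟨𝒞, h𝒞, hord⟩ := exists_optimal_cover G
  obtain ⟨Kℓ, hℓK, hKsub, hKC⟩ := exists_leaf_join h𝒞 hℓ
  -- the restricted cover of G'
  set 𝒟 : Set (Sym2 (Set V)) := {q | ∃ p ∈ 𝒞, ∃ K L : Set V, p = s(K, L) ∧
    (K \ {w}).Nonempty ∧ (L \ {w}).Nonempty ∧ q = s(K \ {w}, L \ {w})} with h𝒟def
  have hcov : (deleteVertexEdges G w).IsSetJoinCover 𝒟 := by
    constructor
    · rintro q ⟨p, hp, K, L, hpeq, hKne, hLne, rfl⟩ A hA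
      rcases Sym2.mem_iff.mp hA with rfl | rfl
      · exact hKne
      · exact hLne
    · intro u v
      constructor
      · rintro ⟨h, hu, hv⟩
        obtain ⟨p, hp, K, L, hpeq, huK, hvL⟩ := (h𝒞.2 u v).mp h
        exact ⟨_, ⟨p, hp, K, L, hpeq, ⟨u, huK, hu⟩, ⟨v, hvL, hv⟩, rfl⟩,
          K \ {w}, L \ {w}, rfl, ⟨huK, hu⟩, ⟨hvL, hv⟩⟩
      · rintro ⟨q, ⟨p, hp, K, L, hpeq, hKne, hLne, rfl⟩, A, B, hq, huA, hvB⟩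
        rcases Sym2.eq_iff.mp hq with ⟨hA, hB⟩ | ⟨hA, hB⟩
        · rw [← hA] at huA; rw [← hB] at hvB
          exact ⟨adj_of_cover h𝒞 hp hpeq huA.1 hvB.1, huA.2, hvB.2⟩
        · rw [← hA] at hvB; rw [← hB] at huA
          exact ⟨G.symm (adj_of_cover h𝒞 hp hpeq hvB.1 huA.1), huA.2, hvB.2⟩
  -- counting
  have hKc : Kℓ ∈ comps 𝒞 := ⟨_, hKC, Sym2.mem_iff.mpr (Or.inl rfl)⟩
  have hwc : ({w} : Set V) ∈ comps 𝒞 := ⟨_, hKC, Sym2.mem_iff.mpr (Or.inr rfl)⟩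
  have hwK : ({w} : Set V) ≠ Kℓ := by
    intro h
    rw [← h] at hℓK
    exact hlw (Set.mem_singleton_iff.mp hℓK)
  have hsub : comps 𝒟 ⊆ (fun K => K \ {w}) '' (comps 𝒞 \ {{w}, Kℓ}) := by
    rintro A ⟨q, ⟨p, hp, K, L, hpeq, hKne, hLne, rfl⟩, hA⟩
    have hme : ∀ X Y : Set V, p = s(X, Y) → (Y \ {w}).Nonempty → ℓ ∉ X := by
      intro X Y hXY hYne hℓX
      obtain ⟨y, hyY, hyw⟩ := hYne
      have : G.Adj ℓ y := adj_of_cover h𝒞 hp hXY hℓX hyY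
      exact hyw (Set.mem_singleton_iff.mp (hℓ ▸ this : y ∈ ({w} : Set V)))
    rcases Sym2.mem_iff.mp hA with rfl | rfl
    · refine ⟨K, ⟨⟨p, hp, hpeq ▸ Sym2.mem_iff.mpr (Or.inl rfl)⟩, ?_⟩, rfl⟩
      rintro (rfl | rfl)
      · obtain ⟨x, hx1, hx2⟩ := hKne
        exact hx2 hx1
      · exact hme _ _ hpeq hLne hℓK
    · refine ⟨L, ⟨⟨p, hp, hpeq ▸ Sym2.mem_iff.mpr (Or.inr rfl)⟩, ?_⟩, rfl⟩
      rintro (rfl | rfl)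
      · obtain ⟨x, hx1, hx2⟩ := hLne
        exact hx2 hx1
      · exact hme _ _ (hpeq.trans Sym2.eq_swap) hKne hℓK
  have hpairsub : ({({w} : Set V), Kℓ} : Set (Set V)) ⊆ comps 𝒞 := by
    rintro A (rfl | rfl); exacts [hwc, hKc]
  have hk2 : 2 ≤ (comps 𝒞).ncard := by
    calc 2 = ({({w} : Set V), Kℓ} : Set (Set V)).ncard := (Set.ncard_pair hwK).symm
    _ ≤ (comps 𝒞).ncard := Set.ncard_le_ncard hpairsub (Set.toFinite _)
  have hdiff : (comps 𝒞 \ {({w} : Set V), Kℓ}).ncard = (comps 𝒞).ncard - 2 := by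
    rw [Set.ncard_diff hpairsub (Set.toFinite _), Set.ncard_pair hwK]
  have h1 : (comps 𝒟).ncard ≤ ((fun K => K \ {w}) '' (comps 𝒞 \ {{w}, Kℓ})).ncard :=
    Set.ncard_le_ncard hsub (Set.toFinite _)
  have h2 : ((fun K => K \ {w}) '' (comps 𝒞 \ {{w}, Kℓ})).ncard ≤
      (comps 𝒞 \ {({w} : Set V), Kℓ}).ncard := Set.ncard_image_le (Set.toFinite _)
  have hle := st_le_coverOrder hcov
  unfold coverOrder at *
  omega

end Aux

/-- Let `ℓ` be a loopless leaf of `G` with unique neighbour `w`, and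
let `G'` be obtained from `G` by deleting all edges incident to `w`. Then
`st₊(G) = st₊(G') + 2`, and every optimal set-join cover of `G` contains a set-join
`{w} ∨ N` with `N_G(w) ∩ L(G) ⊆ N ⊆ N_G(w)`, where `L(G)` is the set of loopless
leaves of `G`. -/
theorem st_deleteVertexEdges_of_leaf {V : Type*} [Fintype V] (G : LGraph V)
    (ℓ w : V) (hleaf : LooplessLeaf G ℓ) (hnbhd : G.neighborSet ℓ = {w}) :
    G.st = (deleteVertexEdges G w).st + 2 ∧
    ∀ 𝒞 : Set (Sym2 (Set V)), G.IsOptimalCover 𝒞 →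
      ∃ N : Set V, G.neighborSet w ∩ {v : V | LooplessLeaf G v} ⊆ N ∧
        N ⊆ G.neighborSet w ∧ s(({w} : Set V), N) ∈ 𝒞 := by
  have hadj : G.Adj ℓ w := by
    have : w ∈ G.neighborSet ℓ := by rw [hnbhd]; rfl
    exact this
  have hlw : ℓ ≠ w := by
    intro h
    apply hleaf.1
    rw [h] at hadj
    rw [h]
    exact hadj
  constructor
  · exact le_antisymm (st_le_aux hadj) (st_ge_aux hnbhd hlw)
  · intro 𝒞 hopt
    have h𝒞 := hopt.1
    obtain ⟨N, hℓN, hNsub, hNC⟩ := exists_leaf_join h𝒞 hnbhd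
    refine ⟨N, ?_, hNsub, by rw [Sym2.eq_swap]; exact hNC⟩
    rintro v ⟨hvw, hvleaf⟩
    obtain ⟨hvloop, w', hw'⟩ := hvleaf
    have hwv : G.Adj w v := hvw
    have hmem : w ∈ G.neighborSet v := G.symm hwv
    rw [hw'] at hmem
    have hww' : w = w' := Set.mem_singleton_iff.mp hmem
    have hvnb : G.neighborSet v = {w} := by rw [hw', ← hww']
    have hvw' : v ≠ w := by
      intro h
      apply hvloop
      rw [h] at hwv
      rw [h]
      exact hwv
    obtain ⟨K, hvK, hKsub, hKC⟩ := exists_leaf_join h𝒞 hvnb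
    have hKN : K = N := leaf_comp_unique hopt hvnb hnbhd hvK hℓN hvw' hlw hKC hNC
    rw [← hKN]
    exact hvK

end LGraph
end

section
/- For paths without loops, st_+(P_{2k}) = st_+(P_{2k+1}) = 2k for every k ≥ 1, where P_n denotes the path on n vertices. -/
open Matrix

namespace LGraph

variable {V W : Type*}

/-! ### Auxiliary lemmas for paths -/

lemma path_adj {n : ℕ} {a b : Fin n} :
    (pathGraph n).Adj a b ↔ ((a : ℕ) + 1 = b ∨ (b : ℕ) + 1 = a) := Iff.rfl

lemma path_sum {n : ℕ} {v a b : Fin n} (ha : (pathGraph n).Adj v a)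
    (hb : (pathGraph n).Adj v b) (hab : a ≠ b) : (a : ℕ) + (b : ℕ) = 2 * (v : ℕ) := by
  rw [path_adj] at ha hb
  have : (a : ℕ) ≠ (b : ℕ) := fun h => hab (Fin.ext h)
  omega

lemma path_three {n : ℕ} {v a b u : Fin n} (ha : (pathGraph n).Adj v a)
    (hb : (pathGraph n).Adj v b) (hu : (pathGraph n).Adj v u) (hab : a ≠ b) :
    u = a ∨ u = b := by
  rw [path_adj] at ha hb hu
  have : (a : ℕ) ≠ (b : ℕ) := fun h => hab (Fin.ext h)
  have : (u : ℕ) = (a : ℕ) ∨ (u : ℕ) = (b : ℕ) := by omega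
  rcases this with h | h
  · exact Or.inl (Fin.ext h)
  · exact Or.inr (Fin.ext h)

/-- Upper bound: explicit set-join cover of the path of order `2 * (n / 2)`. -/
lemma path_cover_exists (n : ℕ) :
    ∃ 𝒞 : Set (Sym2 (Set (Fin n))), (pathGraph n).IsSetJoinCover 𝒞 ∧
      coverOrder 𝒞 ≤ 2 * (n / 2) := by
  classical
  set Nb : Fin n → Set (Fin n) := fun v => {w | (pathGraph n).Adj v w} with hNb
  set O : Set (Fin n) := {v | (v : ℕ) % 2 = 1} with hO
  refine ⟨{p | ∃ v ∈ O, p = s(({v} : Set (Fin n)), Nb v)}, ⟨?_, ?_⟩, ?_⟩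
  · rintro p ⟨v, hv, rfl⟩ K hK
    rw [Sym2.mem_iff] at hK
    have hv1 : 1 ≤ (v : ℕ) := by
      have := hv; simp only [hO, Set.mem_setOf_eq] at this; omega
    rcases hK with rfl | rfl
    · exact ⟨v, rfl⟩
    · refine ⟨⟨(v : ℕ) - 1, by omega⟩, ?_⟩
      show (pathGraph n).Adj v _
      rw [path_adj]; right; simp; omega
  · intro u w
    constructor
    · intro huw
      have h' := huw
      rw [path_adj] at h'
      have hodd : ((u : ℕ) % 2 = 1) ∨ ((w : ℕ) % 2 = 1) := by omega
      rcases hodd with h | h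
      · exact ⟨s(({u} : Set (Fin n)), Nb u), ⟨u, h, rfl⟩, {u}, Nb u, rfl, rfl, huw⟩
      · refine ⟨s(({w} : Set (Fin n)), Nb w), ⟨w, h, rfl⟩, Nb w, {w}, ?_, (pathGraph n).symm huw, rfl⟩
        rw [Sym2.eq_swap]
    · rintro ⟨p, ⟨v, hv, rfl⟩, K, L, hp, hu, hw⟩
      rw [Sym2.eq_iff] at hp
      rcases hp with ⟨rfl, rfl⟩ | ⟨rfl, rfl⟩
      · rcases hu with rfl
        exact hw
      · rcases hw with rfl
        exact (pathGraph n).symm hu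
  · have hsub : comps {p | ∃ v ∈ O, p = s(({v} : Set (Fin n)), Nb v)} ⊆
        (fun v => ({v} : Set (Fin n))) '' O ∪ Nb '' O := by
      rintro K ⟨p, ⟨v, hv, rfl⟩, hK⟩
      rw [Sym2.mem_iff] at hK
      rcases hK with rfl | rfl
      · exact Or.inl ⟨v, hv, rfl⟩
      · exact Or.inr ⟨v, hv, rfl⟩
    have hO2 : O.ncard ≤ n / 2 := by
      have := Set.ncard_le_ncard_of_injOn
        (fun v : Fin n => ((v : ℕ) / 2 : ℕ)) (s := O) (t := ↑(Finset.range (n / 2)))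
        ?_ ?_ ((Finset.range (n / 2)).finite_toSet)
      · calc O.ncard ≤ (↑(Finset.range (n / 2)) : Set ℕ).ncard := this
          _ = n / 2 := by rw [Set.ncard_coe_finset, Finset.card_range]
      · intro a ha
        simp only [hO, Set.mem_setOf_eq] at ha
        simp only [Finset.coe_range, Set.mem_Iio]
        have := a.isLt; omega
      · intro a ha b hb hab
        simp only [hO, Set.mem_setOf_eq] at ha hb hab
        apply Fin.ext; omega
    calc coverOrder _ ≤ ((fun v => ({v} : Set (Fin n))) '' O ∪ Nb '' O).ncard :=
          Set.ncard_le_ncard hsub (Set.toFinite _)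
      _ ≤ ((fun v => ({v} : Set (Fin n))) '' O).ncard + (Nb '' O).ncard :=
          Set.ncard_union_le _ _
      _ ≤ O.ncard + O.ncard := by
          gcongr <;> exact Set.ncard_image_le (Set.toFinite _)
      _ ≤ 2 * (n / 2) := by omega

/-- Lower bound: every set-join cover of the path has order at least `2 * (n / 2)`. -/
lemma path_cover_lb (n : ℕ) (𝒞 : Set (Sym2 (Set (Fin n))))
    (hc : (pathGraph n).IsSetJoinCover 𝒞) : 2 * (n / 2) ≤ coverOrder 𝒞 := by
  classical
  rcases Nat.lt_or_ge n 2 with hn | hn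
  · interval_cases n <;> simp [coverOrder]
  -- structure of pairs in the cover
  have hadj : ∀ p ∈ 𝒞, ∀ K L : Set (Fin n), p = s(K, L) →
      ∀ u ∈ K, ∀ w ∈ L, (pathGraph n).Adj u w := by
    intro p hp K L hpKL u hu w hw
    exact (hc.2 u w).mpr ⟨p, hp, K, L, hpKL, hu, hw⟩
  have hstruct : ∀ p ∈ 𝒞, ∃ (v : Fin n) (L : Set (Fin n)),
      p = s(({v} : Set (Fin n)), L) ∧ L.Nonempty ∧ ∀ u ∈ L, (pathGraph n).Adj v u := by
    intro p
    induction p using Sym2.ind with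
    | _ K L =>
      intro hp
      have hK : K.Nonempty := hc.1 _ hp K (Sym2.mem_mk_left _ _)
      have hL : L.Nonempty := hc.1 _ hp L (Sym2.mem_mk_right _ _)
      by_cases hKs : ∃ v, K = {v}
      · obtain ⟨v, rfl⟩ := hKs
        exact ⟨v, L, rfl, hL, fun u hu => hadj _ hp _ _ rfl v rfl u hu⟩
      · -- K has two distinct elements, so L is a singleton
        obtain ⟨a, ha⟩ := hK
        have : ∃ b ∈ K, b ≠ a := by
          by_contra hcon
          push_neg at hcon
          exact hKs ⟨a, Set.eq_singleton_iff_unique_mem.mpr ⟨ha, hcon⟩⟩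
        obtain ⟨b, hb, hba⟩ := this
        obtain ⟨c, hcL⟩ := hL
        refine ⟨c, K, ?_, ⟨a, ha⟩, fun u hu => (pathGraph n).symm (hadj _ hp _ _ rfl u hu c ?_)⟩
        · rw [Sym2.eq_swap]
          have : L = {c} := by
            apply Set.eq_singleton_iff_unique_mem.mpr
            refine ⟨hcL, fun d hd => ?_⟩
            by_contra hdc
            have h1 : (c : ℕ) + (d : ℕ) = 2 * (a : ℕ) :=
              path_sum (hadj _ hp _ _ rfl a ha c hcL) (hadj _ hp _ _ rfl a ha d hd) (Ne.symm hdc)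
            have h2 : (c : ℕ) + (d : ℕ) = 2 * (b : ℕ) :=
              path_sum (hadj _ hp _ _ rfl b hb c hcL) (hadj _ hp _ _ rfl b hb d hd) (Ne.symm hdc)
            exact hba (Fin.ext (by omega))
          rw [this]
        · exact hcL
  -- the sets S (singleton components) and T (centres of 2-element components)
  set S : Set (Fin n) := {v | ({v} : Set (Fin n)) ∈ comps 𝒞} with hS
  set T : Set (Fin n) := {v | ∃ a b : Fin n, a ≠ b ∧ (pathGraph n).Adj v a ∧
      (pathGraph n).Adj v b ∧ ({a, b} : Set (Fin n)) ∈ comps 𝒞} with hT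
  have hTS : T ⊆ S := by
    rintro v ⟨a, b, hab, hva, hvb, hmem⟩
    obtain ⟨p, hp, hKp⟩ := hmem
    obtain ⟨w, L, hpL, _, hLadj⟩ := hstruct p hp
    subst hpL
    rw [Sym2.mem_iff] at hKp
    rcases hKp with h | h
    · exfalso
      have ha : a ∈ ({w} : Set (Fin n)) := h ▸ (by simp : a ∈ ({a, b} : Set (Fin n)))
      have hb : b ∈ ({w} : Set (Fin n)) := h ▸ (by simp : b ∈ ({a, b} : Set (Fin n)))
      exact hab (ha.trans hb.symm)
    · have hwa : (pathGraph n).Adj w a := hLadj a (h ▸ (by simp : a ∈ ({a, b} : Set (Fin n))))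
      have hwb : (pathGraph n).Adj w b := hLadj b (h ▸ (by simp : b ∈ ({a, b} : Set (Fin n))))
      have h1 := path_sum hwa hwb hab
      have h2 := path_sum hva hvb hab
      have hvw : v = w := Fin.ext (by omega)
      rw [hvw]
      exact ⟨s(({w} : Set (Fin n)), L), hp, Sym2.mem_mk_left _ _⟩
  -- counting: |comps 𝒞| ≥ |S| + |T|
  set Nb : Fin n → Set (Fin n) := fun v => {w | (pathGraph n).Adj v w} with hNb
  have hNbT : ∀ v ∈ T, Nb v ∈ comps 𝒞 := by
    rintro v ⟨a, b, hab, hva, hvb, hmem⟩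
    have : Nb v = {a, b} := by
      apply Set.eq_of_subset_of_subset
      · intro u hu
        rcases path_three hva hvb hu hab with rfl | rfl <;> simp
      · intro u hu
        rcases hu with rfl | hu
        · exact hva
        · rcases hu with rfl; exact hvb
    rw [this]; exact hmem
  have hcount : S.ncard + T.ncard ≤ coverOrder 𝒞 := by
    have hsub : (fun v => ({v} : Set (Fin n))) '' S ∪ Nb '' T ⊆ comps 𝒞 := by
      rintro K (⟨v, hv, rfl⟩ | ⟨v, hv, rfl⟩)
      · exact hv
      · exact hNbT v hv
    have hdisj : Disjoint ((fun v => ({v} : Set (Fin n))) '' S) (Nb '' T) := by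
      rw [Set.disjoint_left]
      rintro K ⟨v, _, rfl⟩ ⟨w, ⟨a, b, hab, hwa, hwb, _⟩, hK⟩
      have ha : a ∈ ({v} : Set (Fin n)) := by rw [show ({v} : Set (Fin n)) = Nb w from hK.symm]; exact hwa
      have hb : b ∈ ({v} : Set (Fin n)) := by rw [show ({v} : Set (Fin n)) = Nb w from hK.symm]; exact hwb
      exact hab (ha.trans hb.symm)
    have h1 : ((fun v => ({v} : Set (Fin n))) '' S).ncard = S.ncard :=
      Set.ncard_image_of_injOn (fun a _ b _ h => Set.singleton_injective h)
    have h2 : (Nb '' T).ncard = T.ncard := by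
      apply Set.ncard_image_of_injOn
      rintro v ⟨a, b, hab, hva, hvb, _⟩ w hw heq
      have hwa : (pathGraph n).Adj w a := by
        have : a ∈ Nb w := heq ▸ hva
        exact this
      have hwb : (pathGraph n).Adj w b := by
        have : b ∈ Nb w := heq ▸ hvb
        exact this
      have e1 := path_sum hva hvb hab
      have e2 := path_sum hwa hwb hab
      exact Fin.ext (by omega)
    calc S.ncard + T.ncard
        = ((fun v => ({v} : Set (Fin n))) '' S ∪ Nb '' T).ncard := by
          rw [Set.ncard_union_eq hdisj (Set.toFinite _) (Set.toFinite _), h1, h2]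
      _ ≤ coverOrder 𝒞 := Set.ncard_le_ncard hsub (Set.toFinite _)
  -- every edge is incident to T or has both endpoints in S
  have hedge : ∀ i : ℕ, ∀ h2 : i + 1 < n,
      ((⟨i, by omega⟩ : Fin n) ∈ T ∨ (⟨i + 1, h2⟩ : Fin n) ∈ T) ∨
      ((⟨i, by omega⟩ : Fin n) ∈ S ∧ (⟨i + 1, h2⟩ : Fin n) ∈ S) := by
    intro i h2
    set u : Fin n := ⟨i, by omega⟩
    set w : Fin n := ⟨i + 1, h2⟩
    have huw : (pathGraph n).Adj u w := by rw [path_adj]; left; rfl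
    obtain ⟨p, hp, K, L, hpKL, hu, hw⟩ := (hc.2 u w).mp huw
    obtain ⟨v, M, hpM, hMne, hMadj⟩ := hstruct p hp
    rw [hpM, Sym2.eq_iff] at hpKL
    have key : ∀ (x y : Fin n), x ∈ ({v} : Set (Fin n)) → y ∈ M →
        ((x ∈ T ∨ y ∈ T) ∨ (x ∈ S ∧ y ∈ S)) := by
      rintro x y rfl hy
      by_cases hMb : ∃ b ∈ M, b ≠ y
      · obtain ⟨b, hb, hby⟩ := hMb
        left; left
        refine ⟨y, b, hby.symm, hMadj y hy, hMadj b hb, ?_⟩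
        have : M = {y, b} := by
          apply Set.eq_of_subset_of_subset
          · intro z hz
            rcases path_three (hMadj y hy) (hMadj b hb) (hMadj z hz) (Ne.symm hby) with rfl | rfl
              <;> simp
          · rintro z (rfl | hz)
            · exact hy
            · rcases hz with rfl; exact hb
        rw [← this]
        exact ⟨p, hp, hpM ▸ Sym2.mem_mk_right _ _⟩
      · push_neg at hMb
        have : M = {y} := Set.eq_singleton_iff_unique_mem.mpr ⟨hy, hMb⟩
        right
        constructor
        · exact ⟨p, hp, hpM ▸ Sym2.mem_mk_left _ _⟩
        · rw [hS]; show ({y} : Set (Fin n)) ∈ comps 𝒞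
          rw [← this]
          exact ⟨p, hp, hpM ▸ Sym2.mem_mk_right _ _⟩
    rcases hpKL with ⟨hK, hL⟩ | ⟨hK, hL⟩
    · subst hK; subst hL
      exact key u w hu hw
    · subst hK; subst hL
      rcases key w u hw hu with (h | h) | ⟨h1, h2⟩
      · exact Or.inl (Or.inr h)
      · exact Or.inl (Or.inl h)
      · exact Or.inr ⟨h2, h1⟩
  -- finset counting
  haveI : Nonempty (Fin n) := ⟨⟨0, by omega⟩⟩
  set s : Finset (Fin n) := (Set.toFinite S).toFinset with hs
  set t : Finset (Fin n) := (Set.toFinite T).toFinset with ht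
  have hScard : S.ncard = s.card := Set.ncard_eq_toFinset_card S (Set.toFinite S)
  have hTcard : T.ncard = t.card := Set.ncard_eq_toFinset_card T (Set.toFinite T)
  have hts : t ⊆ s := by
    intro v hv
    rw [hs, Set.Finite.mem_toFinset]
    exact hTS (by rwa [ht, Set.Finite.mem_toFinset] at hv)
  set u : Finset (Fin n) := s \ t with hu
  set u' : Finset (Fin n) := u.filter (fun v => ∃ hv : (v : ℕ) + 1 < n, (⟨(v : ℕ) + 1, hv⟩ : Fin n) ∈ u) with hu'
  -- the injection from edges
  set F : ℕ → Fin n ⊕ Fin n ⊕ Fin n := fun i =>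
    if hi : i + 1 < n then
      (if (⟨i, by omega⟩ : Fin n) ∈ t then Sum.inl ⟨i, by omega⟩
       else if (⟨i + 1, hi⟩ : Fin n) ∈ t then Sum.inr (Sum.inl ⟨i + 1, hi⟩)
       else Sum.inr (Sum.inr ⟨i, by omega⟩))
    else Sum.inl (Classical.arbitrary (Fin n)) with hF
  set W : Finset (Fin n ⊕ Fin n ⊕ Fin n) :=
    t.image Sum.inl ∪ t.image (fun v => Sum.inr (Sum.inl v)) ∪
    u'.image (fun v => Sum.inr (Sum.inr v)) with hW
  have hFmem : ∀ i ∈ Finset.range (n - 1), F i ∈ W := by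
    intro i hi
    rw [Finset.mem_range] at hi
    have hi' : i + 1 < n := by omega
    rw [hF]
    simp only [dif_pos hi']
    by_cases h1 : (⟨i, by omega⟩ : Fin n) ∈ t
    · rw [if_pos h1, hW]
      apply Finset.mem_union_left; apply Finset.mem_union_left
      exact Finset.mem_image_of_mem _ h1
    · rw [if_neg h1]
      by_cases h2 : (⟨i + 1, hi'⟩ : Fin n) ∈ t
      · rw [if_pos h2, hW]
        apply Finset.mem_union_left; apply Finset.mem_union_right
        exact Finset.mem_image_of_mem _ h2
      · rw [if_neg h2, hW]
        apply Finset.mem_union_right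
        have hST : (⟨i, by omega⟩ : Fin n) ∈ S ∧ (⟨i + 1, hi'⟩ : Fin n) ∈ S := by
          rcases hedge i hi' with (hT1 | hT2) | hSS
          · exact absurd (by rw [ht, Set.Finite.mem_toFinset]; exact hT1) h1
          · exact absurd (by rw [ht, Set.Finite.mem_toFinset]; exact hT2) h2
          · exact hSS
        have hu1 : (⟨i, by omega⟩ : Fin n) ∈ u := by
          rw [hu, Finset.mem_sdiff]
          exact ⟨by rw [hs, Set.Finite.mem_toFinset]; exact hST.1, h1⟩
        have hu2 : (⟨i + 1, hi'⟩ : Fin n) ∈ u := by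
          rw [hu, Finset.mem_sdiff]
          exact ⟨by rw [hs, Set.Finite.mem_toFinset]; exact hST.2, h2⟩
        apply Finset.mem_image_of_mem
        rw [hu', Finset.mem_filter]
        exact ⟨hu1, hi', hu2⟩
  have hFinj : Set.InjOn F (Finset.range (n - 1)) := by
    intro i hi j hj hij
    rw [Finset.coe_range, Set.mem_Iio] at hi hj
    have hi' : i + 1 < n := by omega
    have hj' : j + 1 < n := by omega
    rw [hF] at hij
    simp only [dif_pos hi', dif_pos hj'] at hij
    by_cases hi1 : (⟨i, by omega⟩ : Fin n) ∈ t
    · rw [if_pos hi1] at hij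
      by_cases hj1 : (⟨j, by omega⟩ : Fin n) ∈ t
      · rw [if_pos hj1] at hij
        simpa using hij
      · rw [if_neg hj1] at hij
        by_cases hj2 : (⟨j + 1, hj'⟩ : Fin n) ∈ t
        · rw [if_pos hj2] at hij; simp at hij
        · rw [if_neg hj2] at hij; simp at hij
    · rw [if_neg hi1] at hij
      by_cases hj1 : (⟨j, by omega⟩ : Fin n) ∈ t
      · rw [if_pos hj1] at hij
        by_cases hi2 : (⟨i + 1, hi'⟩ : Fin n) ∈ t
        · rw [if_pos hi2] at hij; simp at hij
        · rw [if_neg hi2] at hij; simp at hij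
      · rw [if_neg hj1] at hij
        by_cases hi2 : (⟨i + 1, hi'⟩ : Fin n) ∈ t
        · rw [if_pos hi2] at hij
          by_cases hj2 : (⟨j + 1, hj'⟩ : Fin n) ∈ t
          · rw [if_pos hj2] at hij
            simp only [Sum.inr.injEq, Sum.inl.injEq, Fin.mk.injEq] at hij
            omega
          · rw [if_neg hj2] at hij; simp at hij
        · rw [if_neg hi2] at hij
          by_cases hj2 : (⟨j + 1, hj'⟩ : Fin n) ∈ t
          · rw [if_pos hj2] at hij; simp at hij
          · rw [if_neg hj2] at hij
            simp only [Sum.inr.injEq, Fin.mk.injEq] at hij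
            omega
  have hmain : n - 1 ≤ t.card + t.card + u'.card := by
    calc n - 1 = (Finset.range (n - 1)).card := (Finset.card_range _).symm
      _ ≤ W.card := Finset.card_le_card_of_injOn F hFmem hFinj
      _ ≤ t.card + t.card + u'.card := by
          rw [hW]
          refine le_trans (Finset.card_union_le _ _) ?_
          gcongr
          · refine le_trans (Finset.card_union_le _ _) ?_
            gcongr <;> exact Finset.card_image_le
          · exact Finset.card_image_le
  have hcard_ut : u.card + t.card = s.card := by
    rw [hu, Finset.card_sdiff_of_subset hts]
    have := Finset.card_le_card hts
    omega
  have hu'u : u' ⊆ u := Finset.filter_subset _ _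
  have hcase : u'.card ≤ u.card ∧ (u.Nonempty → u'.card < u.card) := by
    refine ⟨Finset.card_le_card hu'u, fun hne => ?_⟩
    apply Finset.card_lt_card
    rw [Finset.ssubset_iff_of_subset hu'u]
    refine ⟨u.max' hne, Finset.max'_mem _ _, ?_⟩
    intro hmem
    rw [hu', Finset.mem_filter] at hmem
    obtain ⟨_, hv, hmem'⟩ := hmem
    have := Finset.le_max' u _ hmem'
    have : ((⟨(u.max' hne : ℕ) + 1, hv⟩ : Fin n) : ℕ) ≤ ((u.max' hne : Fin n) : ℕ) :=
      Fin.le_def.mp this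
    simp at this
  rcases Finset.eq_empty_or_nonempty u with hue | hune
  · have hue0 : u.card = 0 := by rw [hue, Finset.card_empty]
    have hu'e : u'.card = 0 := by
      have := Finset.card_le_card hu'u
      omega
    have h1 : n - 1 ≤ 2 * t.card := by omega
    have h2 : t.card ≤ s.card := Finset.card_le_card hts
    omega
  · have := hcase.2 hune
    omega

lemma st_path (n : ℕ) : (pathGraph n).st = 2 * (n / 2) := by
  obtain ⟨𝒞₀, hcov, hord⟩ := path_cover_exists n
  apply le_antisymm
  · exact le_trans (Nat.sInf_le ⟨𝒞₀, hcov, rfl⟩) hord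
  · exact le_csInf ⟨coverOrder 𝒞₀, 𝒞₀, hcov, rfl⟩
      (by rintro m ⟨𝒟, hd, rfl⟩; exact path_cover_lb n 𝒟 hd)

/-- For paths without loops, `st₊(P_{2k}) = st₊(P_{2k+1}) = 2k`
for every `k ≥ 1`. -/
theorem st_pathGraph (k : ℕ) (hk : 1 ≤ k) :
    (pathGraph (2 * k)).st = 2 * k ∧ (pathGraph (2 * k + 1)).st = 2 * k := by
  constructor <;> rw [st_path] <;> omega

end LGraph
end

section
/- Let v be a cut vertex of a connected graph G such that removing v and all edges incident to v decomposes G into connected components G_1, …, G_k with k ≥ 2. Then st_+(G) ≤ 2 + Σ_{i=1}^{k} st_+(G_i). -/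
open Matrix

namespace LGraph

variable {V W : Type*}

lemma exists_optimal {V : Type*} (G : LGraph V) :
    ∃ 𝒞 : Set (Sym2 (Set V)), G.IsSetJoinCover 𝒞 ∧ coverOrder 𝒞 = G.st := by
  have hne : {k : ℕ | ∃ 𝒞 : Set (Sym2 (Set V)), G.IsSetJoinCover 𝒞 ∧ coverOrder 𝒞 = k}.Nonempty := by
    refine ⟨_, {p | ∃ a b, G.Adj a b ∧ p = s(({a} : Set V), {b})}, ?_, rfl⟩
    constructor
    · rintro p ⟨a, b, hab, rfl⟩ K hK
      rw [Sym2.mem_iff] at hK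
      rcases hK with rfl | rfl <;> exact ⟨_, rfl⟩
    · intro u w
      constructor
      · intro h
        exact ⟨s(({u} : Set V), {w}), ⟨u, w, h, rfl⟩, {u}, {w}, rfl, rfl, rfl⟩
      · rintro ⟨p, ⟨a, b, hab, rfl⟩, K, L, hpe, huK, hwL⟩
        rw [Sym2.eq_iff] at hpe
        rcases hpe with ⟨hK, hL⟩ | ⟨hK, hL⟩
        · subst hK; subst hL
          rcases huK with rfl; rcases hwL with rfl; exact hab
        · subst hK; subst hL
          rcases huK with rfl; rcases hwL with rfl; exact G.symm hab
  have := Nat.sInf_mem hne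
  obtain ⟨𝒞, h1, h2⟩ := this
  exact ⟨𝒞, h1, h2⟩

lemma ncard_iUnion_le {ι α : Type*} [Fintype ι] (f : ι → Set α) :
    (⋃ i, f i).ncard ≤ ∑ i, (f i).ncard := by
  classical
  have : ∀ s : Finset ι, (⋃ i ∈ s, f i).ncard ≤ ∑ i ∈ s, (f i).ncard := by
    intro s
    induction s using Finset.induction_on with
    | empty => simp
    | insert _ _ hx ih =>
      rename_i a s
      rw [Finset.set_biUnion_insert, Finset.sum_insert hx]
      exact le_trans (Set.ncard_union_le _ _) (Nat.add_le_add le_rfl ih)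
  simpa using this Finset.univ

/-- Let `v` be a cut vertex of a connected graph `G`, so that removing
`v` and all edges incident to `v` decomposes `G` into connected components `G₁, …, G_m`
(`m ≥ 2`), given by the partition `P` of the remaining vertices.  Then
`st₊(G) ≤ 2 + ∑ᵢ st₊(Gᵢ)`. -/
theorem st_le_of_cut_vertex {V : Type*} [Fintype V] (G : LGraph V)
    (hconn : ∀ a b : V, Relation.ReflTransGen G.Adj a b)
    (v : V) (m : ℕ) (hm : 2 ≤ m) (P : Fin m → Set V)
    (hdisj : ∀ i j : Fin m, i ≠ j → Disjoint (P i) (P j))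
    (hne : ∀ i, (P i).Nonempty)
    (hcover : (⋃ i, P i) = {v}ᶜ)
    (hcomp : ∀ i, ∀ a b : P i, Relation.ReflTransGen (G.induce (P i)).Adj a b)
    (hsep : ∀ i j : Fin m, ∀ x ∈ P i, ∀ y ∈ P j, G.Adj x y → i = j) :
    G.st ≤ 2 + ∑ i, (G.induce (P i)).st := by
  classical
  -- choose optimal covers for each part
  choose 𝒞 hcov hord using fun i => exists_optimal (G.induce (P i))
  -- a neighbour of v
  have hvnbr : (G.neighborSet v).Nonempty := by
    obtain ⟨x, hx⟩ := hne ⟨0, by omega⟩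
    have hxv : x ≠ v := by
      have : x ∈ ⋃ i, P i := Set.mem_iUnion.2 ⟨_, hx⟩
      rw [hcover] at this
      simpa using this
    rcases (hconn v x).cases_head with h | ⟨c, hc, _⟩
    · exact absurd h.symm hxv
    · exact ⟨c, hc⟩
  -- lift of a set of vertices in a part to a set of vertices of G
  set lift : ∀ i, Set (P i) → Set V := fun i K => Subtype.val '' K with hlift
  have hliftinj : ∀ i, Function.Injective (lift i) :=
    fun i => Set.image_injective.2 Subtype.val_injective
  -- membership into parts
  have hmem : ∀ x : V, x ≠ v → ∃ i, x ∈ P i := by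
    intro x hx
    have : x ∈ ⋃ i, P i := by rw [hcover]; simpa using hx
    exact Set.mem_iUnion.1 this
  set 𝒟 : Set (Sym2 (Set V)) :=
    insert s(({v} : Set V), G.neighborSet v) (⋃ i, Sym2.map (lift i) '' 𝒞 i) with h𝒟
  have hDcov : G.IsSetJoinCover 𝒟 := by
    constructor
    · rintro p hp K hK
      rcases hp with rfl | hp
      · rw [Sym2.mem_iff] at hK
        rcases hK with rfl | rfl
        · exact ⟨v, rfl⟩
        · exact hvnbr
      · obtain ⟨i, q, hq, rfl⟩ := by
          simpa using hp
        rw [Sym2.mem_map] at hK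
        obtain ⟨A, hA, rfl⟩ := hK
        obtain ⟨a, ha⟩ := (hcov i).1 q hq A hA
        exact ⟨a, ⟨a, ha, rfl⟩⟩
    · intro u w
      constructor
      · intro h
        by_cases hu : u = v
        · exact ⟨_, Or.inl rfl, {v}, G.neighborSet v, rfl, hu, hu ▸ h⟩
        · by_cases hw : w = v
          · exact ⟨_, Or.inl rfl, G.neighborSet v, {v}, Sym2.eq_swap, G.symm (hw ▸ h), hw⟩
          · obtain ⟨i, hui⟩ := hmem u hu
            obtain ⟨j, hwj⟩ := hmem w hw
            have hij := hsep i j u hui w hwj h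
            subst hij
            have : (G.induce (P i)).Adj ⟨u, hui⟩ ⟨w, hwj⟩ := h
            obtain ⟨q, hq, A, B, hqe, hA, hB⟩ := ((hcov i).2 _ _).1 this
            refine ⟨Sym2.map (lift i) q, Or.inr (Set.mem_iUnion.2 ⟨i, ⟨q, hq, rfl⟩⟩),
              lift i A, lift i B, ?_, ⟨_, hA, rfl⟩, ⟨_, hB, rfl⟩⟩
            rw [hqe, Sym2.map_pair_eq]
      · rintro ⟨p, hp, K, L, rfl, huK, hwL⟩
        rcases hp with heq | hp
        · rw [Sym2.eq_iff] at heq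
          rcases heq with ⟨hK, hL⟩ | ⟨hK, hL⟩
          · subst hK; subst hL
            rw [Set.mem_singleton_iff] at huK
            rw [huK]; exact hwL
          · subst hK; subst hL
            rw [Set.mem_singleton_iff] at hwL
            rw [hwL]; exact G.symm huK
        · obtain ⟨i, q, hq, hqmap⟩ := by simpa using hp
          induction q using Sym2.inductionOn with
          | hf A B =>
            rw [Sym2.map_pair_eq, Sym2.eq_iff] at hqmap
            rcases hqmap with ⟨hK, hL⟩ | ⟨hK, hL⟩
            · subst hK; subst hL
              obtain ⟨a, ha, rfl⟩ := huK
              obtain ⟨b, hb, rfl⟩ := hwL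
              exact ((hcov i).2 a b).2 ⟨_, hq, A, B, rfl, ha, hb⟩
            · subst hK; subst hL
              obtain ⟨b, hb, rfl⟩ := huK
              obtain ⟨a, ha, rfl⟩ := hwL
              exact ((hcov i).2 b a).2 ⟨_, hq, B, A, Sym2.eq_swap, hb, ha⟩
  -- st G is at most the order of 𝒟
  have h1 : G.st ≤ coverOrder 𝒟 := Nat.sInf_le ⟨𝒟, hDcov, rfl⟩
  refine h1.trans ?_
  -- bound the order of 𝒟
  have hsub : comps 𝒟 ⊆
      insert ({v} : Set V) (insert (G.neighborSet v) (⋃ i, lift i '' comps (𝒞 i))) := by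
    rintro K ⟨p, hp, hK⟩
    rcases hp with rfl | hp
    · rw [Sym2.mem_iff] at hK
      rcases hK with rfl | rfl
      · exact Or.inl rfl
      · exact Or.inr (Or.inl rfl)
    · obtain ⟨i, q, hq, rfl⟩ := by simpa using hp
      rw [Sym2.mem_map] at hK
      obtain ⟨A, hA, rfl⟩ := hK
      exact Or.inr (Or.inr (Set.mem_iUnion.2 ⟨i, ⟨A, ⟨q, hq, hA⟩, rfl⟩⟩))
  have hfin : (insert ({v} : Set V)
      (insert (G.neighborSet v) (⋃ i, lift i '' comps (𝒞 i)))).Finite := Set.toFinite _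
  calc coverOrder 𝒟 ≤ (insert ({v} : Set V)
        (insert (G.neighborSet v) (⋃ i, lift i '' comps (𝒞 i)))).ncard :=
      Set.ncard_le_ncard hsub hfin
    _ ≤ (insert (G.neighborSet v) (⋃ i, lift i '' comps (𝒞 i))).ncard + 1 :=
      Set.ncard_insert_le _ _
    _ ≤ ((⋃ i, lift i '' comps (𝒞 i)).ncard + 1) + 1 :=
      Nat.add_le_add (Set.ncard_insert_le _ _) le_rfl
    _ ≤ (∑ i, (lift i '' comps (𝒞 i)).ncard + 1) + 1 :=
      Nat.add_le_add (Nat.add_le_add (ncard_iUnion_le _) le_rfl) le_rfl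
    _ = 2 + ∑ i, (G.induce (P i)).st := by
      have : ∀ i, (lift i '' comps (𝒞 i)).ncard = (G.induce (P i)).st := by
        intro i
        rw [Set.ncard_image_of_injective _ (hliftinj i)]
        exact hord i
      simp only [this]
      ring

end LGraph
end

section
/- For the cycle C_n without loops: st_+(C_n) = n for all n ≥ 3 with n ≠ 4, and st_+(C_4) = 2. -/
open Matrix

namespace LGraph

variable {V W : Type*}

section CycleAux

variable {n : ℕ}

private lemma cyc_val_add_one [NeZero n] (hn : 3 ≤ n) (a : Fin n) :
    ((a + 1 : Fin n) : ℕ) = ((a : ℕ) + 1) % n := by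
  haveI : NeZero n := ⟨by omega⟩
  rw [Fin.val_add, Fin.val_one', Nat.mod_eq_of_lt (show 1 < n by omega)]

private lemma cyc_adj_iff [NeZero n] (hn : 3 ≤ n) (i j : Fin n) :
    (cycleGraph n).Adj i j ↔ j = i + 1 ∨ i = j + 1 := by
  show ((i : ℕ) + 1) % n = (j : ℕ) ∨ ((j : ℕ) + 1) % n = (i : ℕ) ↔ _
  rw [Fin.ext_iff (a := j) (b := i + 1), Fin.ext_iff (a := i) (b := j + 1),
    cyc_val_add_one hn, cyc_val_add_one hn]
  constructor
  · rintro (h | h)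
    · exact Or.inl h.symm
    · exact Or.inr h.symm
  · rintro (h | h)
    · exact Or.inl h.symm
    · exact Or.inr h.symm

private lemma cyc_shift_ne (hn : 3 ≤ n) (a : Fin n) (k : ℕ) (hd : ¬ n ∣ k)
    (h : ((a : ℕ) + k) % n = (a : ℕ)) : False := by
  apply hd
  have h1 : (a : ℕ) % n = ((a : ℕ) + k) % n := by
    rw [h, Nat.mod_eq_of_lt a.isLt]
  have := (Nat.modEq_iff_dvd' (Nat.le_add_right (a : ℕ) k)).mp h1
  simpa using this

private lemma cyc_add_one_ne [NeZero n] (hn : 3 ≤ n) (a : Fin n) : a + 1 ≠ a := by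
  intro h
  have hv := congrArg Fin.val h
  rw [cyc_val_add_one hn] at hv
  exact cyc_shift_ne hn a 1 (fun hd => by simp at hd; omega) hv

private lemma cyc_val_add_two [NeZero n] (hn : 3 ≤ n) (a : Fin n) :
    ((a + 1 + 1 : Fin n) : ℕ) = ((a : ℕ) + 2) % n := by
  rw [cyc_val_add_one hn, cyc_val_add_one hn, Nat.mod_add_mod]

private lemma cyc_val_add_four [NeZero n] (hn : 3 ≤ n) (a : Fin n) :
    ((a + 1 + 1 + 1 + 1 : Fin n) : ℕ) = ((a : ℕ) + 4) % n := by
  rw [cyc_val_add_two hn, cyc_val_add_two hn, Nat.mod_add_mod]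

private lemma cyc_add_two_ne [NeZero n] (hn : 3 ≤ n) (a : Fin n) : a + 1 + 1 ≠ a := by
  intro h
  have hv := congrArg Fin.val h
  rw [cyc_val_add_two hn] at hv
  refine cyc_shift_ne hn a 2 (fun hd => ?_) hv
  have := Nat.le_of_dvd (by norm_num) hd
  omega

private lemma cyc_add_four_ne [NeZero n] (hn : 3 ≤ n) (hn4 : n ≠ 4) (a : Fin n) :
    a + 1 + 1 + 1 + 1 ≠ a := by
  intro h
  have hv := congrArg Fin.val h
  rw [cyc_val_add_four hn] at hv
  refine cyc_shift_ne hn a 4 (fun hd => ?_) hv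
  have h4 := Nat.le_of_dvd (by norm_num) hd
  have h3 : n = 3 := by omega
  subst h3
  norm_num at hd

private lemma pair_mem_comps [NeZero n] (hn : 3 ≤ n) {𝒞 : Set (Sym2 (Set (Fin n)))}
    (hc : (cycleGraph n).IsSetJoinCover 𝒞) (a : Fin n)
    (ha : ({a} : Set (Fin n)) ∉ comps 𝒞) :
    ({a, a + 1 + 1} : Set (Fin n)) ∈ comps 𝒞 := by
  haveI : NeZero n := ⟨by omega⟩
  have hadj : (cycleGraph n).Adj a (a + 1) := (cyc_adj_iff hn a (a + 1)).mpr (Or.inl rfl)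
  obtain ⟨p, hp, K, L, hpKL, haK, hL⟩ := (hc.2 a (a + 1)).mp hadj
  have hKmem : K ∈ p := by rw [hpKL]; exact Sym2.mem_mk_left K L
  have hKc : K ∈ comps 𝒞 := ⟨p, hp, hKmem⟩
  have hsub : ∀ x ∈ K, x = a ∨ x = a + 1 + 1 := by
    intro x hx
    have hax : (cycleGraph n).Adj x (a + 1) :=
      (hc.2 x (a + 1)).mpr ⟨p, hp, K, L, hpKL, hx, hL⟩
    rcases (cyc_adj_iff hn x (a + 1)).mp hax with h | h
    · exact Or.inl (add_right_cancel h.symm)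
    · exact Or.inr h
  have hKne : K ≠ {a} := fun h => ha (h ▸ hKc)
  have hb : a + 1 + 1 ∈ K := by
    by_contra hbn
    apply hKne
    refine Set.eq_singleton_iff_unique_mem.mpr ⟨haK, fun x hx => ?_⟩
    rcases hsub x hx with h | h
    · exact h
    · exact absurd (h ▸ hx) hbn
  have hKeq : K = {a, a + 1 + 1} := by
    apply Set.Subset.antisymm
    · intro x hx
      rcases hsub x hx with h | h
      · exact Or.inl h
      · exact Or.inr h
    · rintro x (rfl | hx)
      · exact haK
      · rw [Set.mem_singleton_iff] at hx
        exact hx ▸ hb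
  exact hKeq ▸ hKc

private lemma cyc_order_ge [NeZero n] (hn : 3 ≤ n) (hn4 : n ≠ 4) {𝒞 : Set (Sym2 (Set (Fin n)))}
    (hc : (cycleGraph n).IsSetJoinCover 𝒞) : n ≤ coverOrder 𝒞 := by
  classical
  set U : Set (Fin n) := {a | ({a} : Set (Fin n)) ∈ comps 𝒞} with hU
  set f : Fin n → Set (Fin n) := fun a => {a} with hf
  set g : Fin n → Set (Fin n) := fun a => {a, a + 1 + 1} with hg
  have hfinj : Function.Injective f := Set.singleton_injective
  have hginj : Function.Injective g := by
    intro a b h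
    have ha : a ∈ ({b, b + 1 + 1} : Set (Fin n)) := by
      rw [show ({b, b + 1 + 1} : Set (Fin n)) = g b from rfl, ← h]
      exact Set.mem_insert _ _
    have hbm : b ∈ ({a, a + 1 + 1} : Set (Fin n)) := by
      rw [show ({a, a + 1 + 1} : Set (Fin n)) = g a from rfl, h]
      exact Set.mem_insert _ _
    rcases ha with rfl | ha
    · rfl
    · rw [Set.mem_singleton_iff] at ha
      rcases hbm with rfl | hbm
      · exact absurd ha.symm (cyc_add_two_ne hn b)
      · rw [Set.mem_singleton_iff] at hbm
        subst ha
        exact absurd (by rw [← hbm]) (cyc_add_four_ne hn hn4 b)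
  have hsubU : f '' U ⊆ comps 𝒞 := by
    rintro K ⟨a, haU, rfl⟩
    exact haU
  have hsubT : g '' Uᶜ ⊆ comps 𝒞 := by
    rintro K ⟨a, haU, rfl⟩
    exact pair_mem_comps hn hc a haU
  have hdisj : Disjoint (f '' U) (g '' Uᶜ) := by
    rw [Set.disjoint_left]
    rintro K ⟨a, _, rfl⟩ ⟨b, _, hK⟩
    have hb1 : b ∈ ({a} : Set (Fin n)) := by
      rw [show ({a} : Set (Fin n)) = f a from rfl, ← hK]
      exact Set.mem_insert _ _
    have hb2 : b + 1 + 1 ∈ ({a} : Set (Fin n)) := by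
      rw [show ({a} : Set (Fin n)) = f a from rfl, ← hK]
      exact Set.mem_insert_of_mem _ rfl
    rw [Set.mem_singleton_iff] at hb1 hb2
    exact cyc_add_two_ne hn b (hb2.trans hb1.symm)
  calc n = Nat.card (Fin n) := by simp
    _ = U.ncard + Uᶜ.ncard := (Set.ncard_add_ncard_compl U).symm
    _ = (f '' U).ncard + (g '' Uᶜ).ncard := by
        rw [Set.ncard_image_of_injective _ hfinj, Set.ncard_image_of_injective _ hginj]
    _ = (f '' U ∪ g '' Uᶜ).ncard :=
        (Set.ncard_union_eq hdisj (Set.toFinite _) (Set.toFinite _)).symm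
    _ ≤ (comps 𝒞).ncard := Set.ncard_le_ncard (Set.union_subset hsubU hsubT) (Set.toFinite _)

private lemma cyc_order_ge_two [NeZero n] (hn : 3 ≤ n) {𝒞 : Set (Sym2 (Set (Fin n)))}
    (hc : (cycleGraph n).IsSetJoinCover 𝒞) : 2 ≤ coverOrder 𝒞 := by
  haveI : NeZero n := ⟨by omega⟩
  have hadj : (cycleGraph n).Adj 0 1 :=
    (cyc_adj_iff hn 0 1).mpr (Or.inl (zero_add 1).symm)
  obtain ⟨p, hp, K, L, hpKL, h0K, h1L⟩ := (hc.2 0 1).mp hadj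
  have hKc : K ∈ comps 𝒞 := ⟨p, hp, by rw [hpKL]; exact Sym2.mem_mk_left K L⟩
  have hLc : L ∈ comps 𝒞 := ⟨p, hp, by rw [hpKL]; exact Sym2.mem_mk_right K L⟩
  have hne : K ≠ L := by
    rintro rfl
    have h00 : (cycleGraph n).Adj 0 0 := (hc.2 0 0).mpr ⟨p, hp, K, K, hpKL, h0K, h0K⟩
    rcases (cyc_adj_iff hn 0 0).mp h00 with h | h <;>
      exact cyc_add_one_ne hn 0 h.symm
  exact (Set.one_lt_ncard (Set.toFinite _)).mpr ⟨K, hKc, L, hLc, hne⟩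

private lemma cyc_cover_n [NeZero n] (hn : 3 ≤ n) :
    ∃ 𝒞 : Set (Sym2 (Set (Fin n))),
      (cycleGraph n).IsSetJoinCover 𝒞 ∧ coverOrder 𝒞 = n := by
  haveI : NeZero n := ⟨by omega⟩
  refine ⟨Set.range (fun i : Fin n => s(({i} : Set (Fin n)), {i + 1})), ⟨?_, ?_⟩, ?_⟩
  · rintro p ⟨i, rfl⟩ K hK
    rcases Sym2.mem_iff.mp hK with rfl | rfl <;> exact Set.singleton_nonempty _
  · intro u v
    rw [cyc_adj_iff hn]
    constructor
    · rintro (rfl | rfl)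
      · exact ⟨_, ⟨u, rfl⟩, {u}, {u + 1}, rfl, rfl, rfl⟩
      · exact ⟨_, ⟨v, rfl⟩, {v + 1}, {v}, Sym2.eq_swap, rfl, rfl⟩
    · rintro ⟨p, ⟨i, rfl⟩, K, L, hpKL, hu, hv⟩
      rcases Sym2.eq_iff.mp hpKL with ⟨rfl, rfl⟩ | ⟨rfl, rfl⟩
      · rw [Set.mem_singleton_iff] at hu hv
        exact Or.inl (by rw [hu, hv])
      · rw [Set.mem_singleton_iff] at hu hv
        exact Or.inr (by rw [hu, hv])
  · have hcomps : comps (Set.range fun i : Fin n => s(({i} : Set (Fin n)), {i + 1}))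
        = Set.range (fun a : Fin n => ({a} : Set (Fin n))) := by
      ext K
      constructor
      · rintro ⟨p, ⟨i, rfl⟩, hK⟩
        rcases Sym2.mem_iff.mp hK with rfl | rfl
        exacts [⟨i, rfl⟩, ⟨i + 1, rfl⟩]
      · rintro ⟨a, rfl⟩
        exact ⟨_, ⟨a, rfl⟩, Sym2.mem_mk_left _ _⟩
    rw [coverOrder, hcomps, ← Set.image_univ,
      Set.ncard_image_of_injective _ Set.singleton_injective, Set.ncard_univ]
    simp

private lemma cyc_cover_four :
    ∃ 𝒞 : Set (Sym2 (Set (Fin 4))),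
      (cycleGraph 4).IsSetJoinCover 𝒞 ∧ coverOrder 𝒞 = 2 := by
  set E : Set (Fin 4) := {x | x = 0 ∨ x = 2} with hE
  set O : Set (Fin 4) := {x | x = 1 ∨ x = 3} with hO
  have key : ∀ u v : Fin 4,
      ((((u : ℕ) + 1) % 4 = (v : ℕ) ∨ ((v : ℕ) + 1) % 4 = (u : ℕ))) ↔
        ((u = 0 ∨ u = 2) ∧ (v = 1 ∨ v = 3) ∨ (u = 1 ∨ u = 3) ∧ (v = 0 ∨ v = 2)) := by
    decide
  have hEO : E ≠ O := by
    intro h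
    have h0 : (0 : Fin 4) ∈ E := Or.inl rfl
    rw [h] at h0
    rcases h0 with h0 | h0 <;> exact absurd h0 (by decide)
  refine ⟨{s(E, O)}, ⟨?_, ?_⟩, ?_⟩
  · rintro p rfl K hK
    rcases Sym2.mem_iff.mp hK with rfl | rfl
    · exact ⟨0, Or.inl rfl⟩
    · exact ⟨1, Or.inl rfl⟩
  · intro u v
    constructor
    · intro h
      have h' := (key u v).mp h
      rcases h' with ⟨hu, hv⟩ | ⟨hu, hv⟩
      · exact ⟨_, rfl, E, O, rfl, hu, hv⟩
      · exact ⟨_, rfl, O, E, Sym2.eq_swap, hu, hv⟩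
    · rintro ⟨p, rfl, K, L, hpKL, hu, hv⟩
      rcases Sym2.eq_iff.mp hpKL.symm with ⟨rfl, rfl⟩ | ⟨rfl, rfl⟩
      · exact (key u v).mpr (Or.inl ⟨hu, hv⟩)
      · exact (key u v).mpr (Or.inr ⟨hu, hv⟩)
  · have hcomps : comps ({s(E, O)} : Set (Sym2 (Set (Fin 4)))) = {E, O} := by
      ext K
      constructor
      · rintro ⟨p, rfl, hK⟩
        rcases Sym2.mem_iff.mp hK with rfl | rfl
        · exact Or.inl rfl
        · exact Or.inr rfl
      · rintro (rfl | rfl)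
        · exact ⟨_, rfl, Sym2.mem_mk_left _ _⟩
        · exact ⟨_, rfl, Sym2.mem_mk_right _ _⟩
    rw [coverOrder, hcomps, Set.ncard_pair hEO]

end CycleAux

/-- For the cycle `Cₙ` without loops, `st₊(Cₙ) = n` for all `n ≥ 3`
with `n ≠ 4`, and `st₊(C₄) = 2`. -/
theorem st_cycleGraph (n : ℕ) (hn : 3 ≤ n) :
    (n ≠ 4 → (cycleGraph n).st = n) ∧ (cycleGraph 4).st = 2 := by
  haveI : NeZero n := ⟨by omega⟩
  constructor
  · intro hn4
    obtain ⟨𝒞, hc, ho⟩ := cyc_cover_n hn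
    refine le_antisymm (Nat.sInf_le ⟨𝒞, hc, ho⟩) (le_csInf ⟨n, 𝒞, hc, ho⟩ ?_)
    rintro k ⟨𝒟, hd, rfl⟩
    exact cyc_order_ge hn hn4 hd
  · obtain ⟨𝒞, hc, ho⟩ := cyc_cover_four
    refine le_antisymm (Nat.sInf_le ⟨𝒞, hc, ho⟩) (le_csInf ⟨2, 𝒞, hc, ho⟩ ?_)
    rintro k ⟨𝒟, hd, rfl⟩
    exact cyc_order_ge_two (n := 4) (by norm_num) hd

end LGraph
end

section
/- For the complete graph K_n without loops (n ≥ 2): st_+(K_n) = 3i if 2·3^{i−1} < n ≤ 3^i, st_+(K_n) = 3i+1 if 3^i < n ≤ 4·3^{i−1}, and st_+(K_n) = 3i+2 if 4·3^{i−1} < n ≤ 2·3^i. -/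
open Matrix

namespace STAux


def fP : ℕ → ℕ
  | 0 => 1
  | 1 => 1
  | 2 => 2
  | 3 => 3
  | 4 => 4
  | (n+5) => 3 * fP (n+2)

lemma fP_add_three {n : ℕ} (h : 2 ≤ n) : fP (n+3) = 3 * fP n := by
  obtain ⟨m, rfl⟩ := Nat.exists_eq_add_of_le h
  rw [show 2+m+3 = m+5 from by omega, show 2+m = m+2 from by omega]
  rfl

lemma fP_le_succ : ∀ n, fP n ≤ fP (n+1)
  | 0 => by decide
  | 1 => by decide
  | 2 => by decide
  | 3 => by decide
  | 4 => by decide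
  | (n+5) => by
    have h := fP_le_succ (n+2)
    rw [show n+2+1 = n+3 from rfl] at h
    show 3 * fP (n+2) ≤ fP ((n+3)+3)
    rw [fP_add_three (by omega)]
    omega

lemma fP_mono : Monotone fP := monotone_nat_of_le_succ fP_le_succ

lemma L2 : ∀ a, 2 * fP a ≤ fP (a+2)
  | 0 => by decide
  | 1 => by decide
  | 2 => by decide
  | 3 => by decide
  | 4 => by decide
  | (a+5) => by
    have h := L2 (a+2)
    show 2 * (3 * fP (a+2)) ≤ fP ((a+4)+3)
    rw [fP_add_three (by omega)]
    have h2 : fP ((a+2)+2) = fP (a+4) := rfl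
    omega

lemma L3 : ∀ a, 3 * fP a ≤ fP (a+3)
  | 0 => by decide
  | 1 => by decide
  | (a+2) => by rw [fP_add_three (by omega)]

lemma L4' : ∀ a, 4 * fP (a+2) ≤ 3 * fP (a+3)
  | 0 => by decide
  | 1 => by decide
  | 2 => by decide
  | (a+3) => by
    have h := L4' a
    show 4 * fP ((a+2)+3) ≤ 3 * fP ((a+3)+3)
    rw [fP_add_three (show 2 ≤ a+2 by omega), fP_add_three (show 2 ≤ a+3 by omega)]
    omega

lemma L4 : ∀ a, 4 * fP a ≤ fP (a+4)
  | 0 => by decide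
  | 1 => by decide
  | (a+2) => by
    have h := L4' a
    show 4 * fP (a+2) ≤ fP ((a+3)+3)
    rw [fP_add_three (by omega)]
    omega

lemma key : ∀ j a, j * fP a ≤ fP (a + j)
  | 0, a => by simp
  | 1, a => by simpa using fP_le_succ a
  | 2, a => L2 a
  | 3, a => L3 a
  | 4, a => L4 a
  | (j+5), a => by
    have h1 := key (j+2) a
    have h2 := L3 (a + (j+2))
    have h3 : a + (j+2) + 3 = a + (j+5) := by omega
    rw [h3] at h2
    nlinarith [fP_mono (Nat.zero_le a), Nat.zero_le (fP a)]

lemma f30 : ∀ i, fP (3*i) = 3^i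
  | 0 => by decide
  | 1 => by decide
  | (i+2) => by
    have h := f30 (i+1)
    have : 3*(i+2) = (3*(i+1))+3 := by ring
    rw [this, fP_add_three (by omega), h]
    ring

lemma f32 : ∀ i, fP (3*i+2) = 2 * 3^i
  | 0 => by decide
  | (i+1) => by
    have h := f32 i
    have : 3*(i+1)+2 = (3*i+2)+3 := by ring
    rw [this, fP_add_three (by omega), h]
    ring

lemma f31 : ∀ i, fP (3*i+4) = 4 * 3^i
  | 0 => by decide
  | (i+1) => by
    have h := f31 i
    have : 3*(i+1)+4 = (3*i+4)+3 := by ring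
    rw [this, fP_add_three (by omega), h]
    ring





section MM

variable {α : Type*} {r : α → α → Prop}

def Indep (r : α → α → Prop) (S : Finset α) : Prop := ∀ a ∈ S, ∀ b ∈ S, ¬ r a b

def MaxIndep [DecidableEq α] (r : α → α → Prop) (V S : Finset α) : Prop :=
  S ⊆ V ∧ Indep r S ∧ ∀ x ∈ V, x ∉ S → ¬ Indep r (insert x S)

lemma erase_maxIndep [DecidableEq α] [DecidableRel r]
    (hsym : ∀ a b, r a b → r b a)
    {V : Finset α} (hirr : ∀ a ∈ V, ¬ r a a) {u : α}
    {S : Finset α} (hS : MaxIndep r V S) (huS : u ∈ S) :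
    MaxIndep r (V.filter (fun x => ¬(x = u ∨ r u x))) (S.erase u) := by
  obtain ⟨hSV, hSi, hSm⟩ := hS
  have huV : u ∈ V := hSV huS
  refine ⟨?_, ?_, ?_⟩
  · intro x hx
    have hxu : x ≠ u := Finset.ne_of_mem_erase hx
    have hxS : x ∈ S := Finset.mem_of_mem_erase hx
    refine Finset.mem_filter.2 ⟨hSV hxS, ?_⟩
    rintro (rfl | hr)
    · exact hxu rfl
    · exact hSi u huS x hxS hr
  · intro a ha b hb
    exact hSi a (Finset.mem_of_mem_erase ha) b (Finset.mem_of_mem_erase hb)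
  · intro x hxV' hxe hind
    have hxV : x ∈ V := (Finset.mem_filter.1 hxV').1
    have hx2 : ¬(x = u ∨ r u x) := (Finset.mem_filter.1 hxV').2
    have hxu : x ≠ u := fun h => hx2 (Or.inl h)
    have hxru : ¬ r u x := fun h => hx2 (Or.inr h)
    have hxS : x ∉ S := fun h => hxe (Finset.mem_erase.2 ⟨hxu, h⟩)
    -- adjacency to u fails for everything in insert x (S.erase u)
    have hu_adj : ∀ c ∈ insert x (S.erase u), ¬ r u c ∧ ¬ r c u := by
      intro c hc
      rcases Finset.mem_insert.1 hc with rfl | hc'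
      · exact ⟨hxru, fun h => hxru (hsym _ _ h)⟩
      · have hcS : c ∈ S := Finset.mem_of_mem_erase hc'
        exact ⟨hSi u huS c hcS, hSi c hcS u huS⟩
    have hsplit : ∀ c ∈ insert x S, c = u ∨ c ∈ insert x (S.erase u) := by
      intro c hc
      rcases Finset.mem_insert.1 hc with rfl | hcS
      · exact Or.inr (Finset.mem_insert_self _ _)
      · by_cases hcu : c = u
        · exact Or.inl hcu
        · exact Or.inr (Finset.mem_insert_of_mem (Finset.mem_erase.2 ⟨hcu, hcS⟩))
    have : Indep r (insert x S) := by
      intro a ha b hb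
      rcases hsplit a ha with hau | ha' <;> rcases hsplit b hb with hbu | hb'
      · rw [hau, hbu]; exact hirr u huV
      · rw [hau]; exact (hu_adj b hb').1
      · rw [hbu]; exact (hu_adj a ha').2
      · exact hind a ha' b hb'
    exact hSm x hxV hxS this

lemma MM_count [DecidableEq α] [DecidableRel r]
    (hsym : ∀ a b, r a b → r b a) :
    ∀ (N : ℕ) (V : Finset α), V.card ≤ N → (∀ a ∈ V, ¬ r a a) →
      ∀ F : Finset (Finset α), (∀ S ∈ F, MaxIndep r V S) → F.card ≤ fP V.card := by
  intro N
  induction N with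
  | zero =>
    intro V hVN _ F hF
    have hV : V = ∅ := Finset.card_eq_zero.1 (Nat.le_zero.1 hVN)
    subst hV
    have : F ⊆ {∅} := by
      intro S hS
      have := (hF S hS).1
      simp only [Finset.subset_empty] at this
      simp [this]
    calc F.card ≤ ({∅} : Finset (Finset α)).card := Finset.card_le_card this
      _ = 1 := rfl
      _ ≤ fP 0 := le_refl _
  | succ N ih =>
    intro V hVN hirr F hF
    rcases V.eq_empty_or_nonempty with rfl | hne
    · -- same as base
      have : F ⊆ {∅} := by
        intro S hS
        have := (hF S hS).1
        simp only [Finset.subset_empty] at this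
        simp [this]
      calc F.card ≤ ({∅} : Finset (Finset α)).card := Finset.card_le_card this
        _ = 1 := rfl
        _ ≤ fP 0 := le_refl _
    · set deg : α → ℕ := fun a => (V.filter (fun b => r a b)).card with hdeg
      obtain ⟨v, hv, hmin⟩ := V.exists_min_image deg hne
      set Nv : Finset α := insert v (V.filter (fun b => r v b)) with hNv
      have hNvV : Nv ⊆ V := Finset.insert_subset hv (Finset.filter_subset _ _)
      have hvnot : v ∉ V.filter (fun b => r v b) := by
        simp only [Finset.mem_filter, not_and]
        exact fun _ => hirr v hv
      have hNvcard : Nv.card = deg v + 1 := by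
        rw [hNv, Finset.card_insert_of_notMem hvnot]
      have hdegv : deg v + 1 ≤ V.card := by
        have hsub : V.filter (fun b => r v b) ⊆ V.erase v := by
          intro x hx
          obtain ⟨hxV, hxr⟩ := Finset.mem_filter.1 hx
          refine Finset.mem_erase.2 ⟨?_, hxV⟩
          rintro rfl; exact hirr x hxV hxr
        have h5 : (V.filter (fun b => r v b)).card ≤ (V.erase v).card :=
          Finset.card_le_card hsub
        rw [Finset.card_erase_of_mem hv] at h5
        have h6 : deg v = (V.filter (fun b => r v b)).card := rfl
        have h7 : 1 ≤ V.card := Finset.card_pos.2 hne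
        omega
      -- every S in F meets Nv
      have hcov : ∀ S ∈ F, ∃ u ∈ Nv, u ∈ S := by
        intro S hS
        obtain ⟨hSV, hSi, hSm⟩ := hF S hS
        by_cases hvS : v ∈ S
        · exact ⟨v, Finset.mem_insert_self _ _, hvS⟩
        · by_contra hno
          push_neg at hno
          apply hSm v hv hvS
          intro a ha b hb
          rcases Finset.mem_insert.1 ha with hav | haS <;>
            rcases Finset.mem_insert.1 hb with hbv | hbS
          · rw [hav, hbv]; exact hirr v hv
          · rw [hav]
            intro hr
            exact hno b (Finset.mem_insert_of_mem (Finset.mem_filter.2 ⟨hSV hbS, hr⟩)) hbS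
          · rw [hbv]
            intro hr
            exact hno a (Finset.mem_insert_of_mem
              (Finset.mem_filter.2 ⟨hSV haS, hsym _ _ hr⟩)) haS
          · exact hSi a haS b hbS
      -- per-u bound
      have hper : ∀ u ∈ Nv,
          (F.filter (fun S => u ∈ S)).card ≤ fP (V.card - 1 - deg v) := by
        intro u hu
        have huV : u ∈ V := hNvV hu
        set V' : Finset α := V.filter (fun x => ¬(x = u ∨ r u x)) with hV'
        have hcompl : V.filter (fun x => (x = u ∨ r u x)) =
            insert u (V.filter (fun b => r u b)) := by
          ext x
          simp only [Finset.mem_filter, Finset.mem_insert]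
          constructor
          · rintro ⟨hxV, rfl | hr⟩
            · exact Or.inl rfl
            · exact Or.inr ⟨hxV, hr⟩
          · rintro (rfl | ⟨hxV, hr⟩)
            · exact ⟨huV, Or.inl rfl⟩
            · exact ⟨hxV, Or.inr hr⟩
        have hunot : u ∉ V.filter (fun b => r u b) := by
          simp only [Finset.mem_filter, not_and]
          exact fun _ => hirr u huV
        have hcomplcard : (V.filter (fun x => (x = u ∨ r u x))).card = deg u + 1 := by
          rw [hcompl, Finset.card_insert_of_notMem hunot]
        have hpart := Finset.card_filter_add_card_filter_not
          (s := V) (p := fun x => (x = u ∨ r u x))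
        have hdu : deg u = (V.filter (fun b => r u b)).card := rfl
        have hV'card : V'.card = V.card - 1 - deg u := by
          rw [hV']
          omega
        have hV'N : V'.card ≤ N := by
          have : V'.card < V.card := by omega
          omega
        have hirr' : ∀ a ∈ V', ¬ r a a := fun a ha =>
          hirr a (Finset.mem_filter.1 ha).1
        set F' : Finset (Finset α) :=
          (F.filter (fun S => u ∈ S)).image (fun S => S.erase u) with hF'
        have hF'max : ∀ T ∈ F', MaxIndep r V' T := by
          intro T hT
          obtain ⟨S, hS, rfl⟩ := Finset.mem_image.1 hT
          obtain ⟨hSF, huS⟩ := Finset.mem_filter.1 hS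
          exact erase_maxIndep hsym hirr (hF S hSF) huS
        have hinj : Set.InjOn (fun S : Finset α => S.erase u) ↑(F.filter (fun S => u ∈ S)) := by
          intro S hS T hT h
          have huS : u ∈ S := (Finset.mem_filter.1 hS).2
          have huT : u ∈ T := (Finset.mem_filter.1 hT).2
          have : insert u (S.erase u) = insert u (T.erase u) := by
            simp only at h; rw [h]
          rwa [Finset.insert_erase huS, Finset.insert_erase huT] at this
        have hcard : (F.filter (fun S => u ∈ S)).card = F'.card :=
          (Finset.card_image_of_injOn hinj).symm
        have hrec := ih V' hV'N hirr' F' hF'max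
        have hmono : fP V'.card ≤ fP (V.card - 1 - deg v) := by
          apply fP_mono
          have := hmin u huV
          omega
        omega
      -- sum up
      have hsub2 : F ⊆ Nv.biUnion (fun u => F.filter (fun S => u ∈ S)) := by
        intro S hS
        obtain ⟨u, hu, huS⟩ := hcov S hS
        exact Finset.mem_biUnion.2 ⟨u, hu, Finset.mem_filter.2 ⟨hS, huS⟩⟩
      have h1 : F.card ≤ ∑ u ∈ Nv, (F.filter (fun S => u ∈ S)).card :=
        le_trans (Finset.card_le_card hsub2) Finset.card_biUnion_le
      have h2 : ∑ u ∈ Nv, (F.filter (fun S => u ∈ S)).card ≤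
          Nv.card * fP (V.card - 1 - deg v) := by
        calc ∑ u ∈ Nv, (F.filter (fun S => u ∈ S)).card
            ≤ ∑ _u ∈ Nv, fP (V.card - 1 - deg v) := Finset.sum_le_sum hper
          _ = Nv.card * fP (V.card - 1 - deg v) := by
              rw [Finset.sum_const, smul_eq_mul]
      have h3 := key (deg v + 1) (V.card - 1 - deg v)
      have h4 : V.card - 1 - deg v + (deg v + 1) = V.card := by omega
      rw [h4] at h3
      rw [hNvcard] at h2
      omega

lemma exists_maxIndep_ext [DecidableEq α] [DecidableRel r]
    (V S : Finset α) (hSV : S ⊆ V) (hS : Indep r S) :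
    ∃ T, MaxIndep r V T ∧ S ⊆ T := by
  classical
  obtain ⟨T, hT, hmax⟩ := (V.powerset.filter (fun T => S ⊆ T ∧ Indep r T)).exists_max_image
    Finset.card ⟨S, by simp [hSV, hS, Finset.mem_powerset]⟩
  rw [Finset.mem_filter, Finset.mem_powerset] at hT
  obtain ⟨hTV, hST, hTi⟩ := hT
  refine ⟨T, ⟨hTV, hTi, ?_⟩, hST⟩
  intro x hxV hxT hind
  have hmem : insert x T ∈ V.powerset.filter (fun T => S ⊆ T ∧ Indep r T) := by
    rw [Finset.mem_filter, Finset.mem_powerset]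
    exact ⟨Finset.insert_subset hxV hTV, hST.trans (Finset.subset_insert _ _), hind⟩
  have := hmax _ hmem
  rw [Finset.card_insert_of_notMem hxT] at this
  omega

lemma FAM [DecidableEq α] [DecidableRel r]
    (hsym : ∀ a b, r a b → r b a)
    (V : Finset α) (hirr : ∀ a ∈ V, ¬ r a a) (F : Finset (Finset α))
    (h1 : ∀ S ∈ F, S ⊆ V ∧ Indep r S)
    (h2 : ∀ S ∈ F, ∀ T ∈ F, S ≠ T → ∃ a ∈ S, ∃ b ∈ T, r a b) :
    F.card ≤ fP V.card := by
  have hex : ∀ S ∈ F, ∃ T, MaxIndep r V T ∧ S ⊆ T := fun S hS =>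
    exists_maxIndep_ext V S (h1 S hS).1 (h1 S hS).2
  choose! g hg1 hg2 using hex
  have hinj : Set.InjOn g ↑F := by
    intro S hS T hT heq
    by_contra hne
    obtain ⟨a, ha, b, hb, hab⟩ := h2 S hS T hT hne
    have haG : a ∈ g S := hg2 S hS ha
    have hbG : b ∈ g S := heq ▸ hg2 T hT hb
    exact (hg1 S hS).2.1 a haG b hbG hab
  calc F.card = (F.image g).card := (Finset.card_image_of_injOn hinj).symm
    _ ≤ fP V.card := MM_count hsym V.card V le_rfl hirr _ (by
        intro T hT
        obtain ⟨S, hS, rfl⟩ := Finset.mem_image.1 hT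
        exact hg1 S hS)

end MM


end STAux

namespace LGraph

variable {V W : Type*}

-- APP PART (to be appended inside namespace LGraph, before the theorem)
open STAux in
lemma completeGraph_adj {n : ℕ} {u v : Fin n} : (completeGraph n).Adj u v ↔ u ≠ v := Iff.rfl

open STAux in
lemma lower_bound {n : ℕ} (hn : 2 ≤ n) (𝒞 : Set (Sym2 (Set (Fin n))))
    (hc : (completeGraph n).IsSetJoinCover 𝒞) : n ≤ fP (coverOrder 𝒞) := by
  classical
  set r : Set (Fin n) → Set (Fin n) → Prop := fun K L => s(K, L) ∈ 𝒞 with hr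
  have hsym : ∀ a b, r a b → r b a := by
    intro a b h
    show s(b, a) ∈ 𝒞
    rwa [Sym2.eq_swap]
  have hfin : (comps 𝒞).Finite := Set.toFinite _
  set V : Finset (Set (Fin n)) := hfin.toFinset with hV
  have hVcard : V.card = coverOrder 𝒞 := by
    rw [coverOrder, Set.ncard_eq_toFinset_card _ hfin]
  have hmemV : ∀ K : Set (Fin n), K ∈ V ↔ K ∈ comps 𝒞 := fun K => Set.Finite.mem_toFinset _
  have hirr : ∀ K ∈ V, ¬ r K K := by
    intro K hK hKK
    obtain ⟨p, hp, hKp⟩ := (hmemV K).1 hK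
    obtain ⟨u, hu⟩ := hc.1 p hp K hKp
    have : (completeGraph n).Adj u u := (hc.2 u u).2 ⟨s(K, K), hKK, K, K, rfl, hu, hu⟩
    exact completeGraph_adj.1 this rfl
  set Sv : Fin n → Finset (Set (Fin n)) := fun v => V.filter (fun K => v ∈ K) with hSv
  have hindep : ∀ v, Indep r (Sv v) := by
    intro v K hK L hL hKL
    have : (completeGraph n).Adj v v := (hc.2 v v).2
      ⟨s(K, L), hKL, K, L, rfl, (Finset.mem_filter.1 hK).2, (Finset.mem_filter.1 hL).2⟩
    exact completeGraph_adj.1 this rfl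
  have hedge : ∀ u v : Fin n, u ≠ v → ∃ K ∈ Sv u, ∃ L ∈ Sv v, r K L := by
    intro u v huv
    obtain ⟨p, hp, K, L, hpe, hu2, hv2⟩ := (hc.2 u v).1 (completeGraph_adj.2 huv)
    subst hpe
    have hKc : K ∈ comps 𝒞 := ⟨_, hp, Sym2.mem_mk_left _ _⟩
    have hLc : L ∈ comps 𝒞 := ⟨_, hp, Sym2.mem_mk_right _ _⟩
    exact ⟨K, Finset.mem_filter.2 ⟨(hmemV K).2 hKc, hu2⟩,
      L, Finset.mem_filter.2 ⟨(hmemV L).2 hLc, hv2⟩, hp⟩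
  have hinj : Function.Injective Sv := by
    intro u v h
    by_contra huv
    obtain ⟨K, hK, L, hL, hKL⟩ := hedge u v huv
    exact hindep v K (h ▸ hK) L hL hKL
  set F : Finset (Finset (Set (Fin n))) := Finset.univ.image Sv with hF
  have hFcard : F.card = n := by
    rw [hF, Finset.card_image_of_injective _ hinj, Finset.card_univ, Fintype.card_fin]
  have h1 : ∀ S ∈ F, S ⊆ V ∧ Indep r S := by
    intro S hS
    obtain ⟨v, _, rfl⟩ := Finset.mem_image.1 hS
    exact ⟨Finset.filter_subset _ _, hindep v⟩
  have h2 : ∀ S ∈ F, ∀ T ∈ F, S ≠ T → ∃ a ∈ S, ∃ b ∈ T, r a b := by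
    intro S hS T hT hST
    obtain ⟨u, _, rfl⟩ := Finset.mem_image.1 hS
    obtain ⟨v, _, rfl⟩ := Finset.mem_image.1 hT
    exact hedge u v (fun h => hST (by rw [h]))
  have := FAM hsym V hirr F h1 h2
  rw [hFcard, hVcard] at this
  exact this

open STAux in
lemma upper_bound {n t : ℕ} (k : Fin t → ℕ) (hn : n ≤ ∏ j, k j) :
    ∃ c ∈ {m : ℕ | ∃ 𝒞 : Set (Sym2 (Set (Fin n))),
      (completeGraph n).IsSetJoinCover 𝒞 ∧ coverOrder 𝒞 = m}, c ≤ ∑ j, k j := by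
  classical
  have hcard : Fintype.card (Fin n) ≤ Fintype.card ((j : Fin t) → Fin (k j)) := by
    rw [Fintype.card_fin]
    calc n ≤ ∏ j, k j := hn
      _ = Fintype.card ((j : Fin t) → Fin (k j)) := by simp [Fintype.card_pi]
  obtain ⟨c⟩ := Function.Embedding.nonempty_iff_card_le.2 hcard
  set C : (j : Fin t) → Fin (k j) → Set (Fin n) := fun j a => {v | c v j = a} with hC
  set 𝒞 : Set (Sym2 (Set (Fin n))) := {p | ∃ (j : Fin t) (a b : Fin (k j)),
    a ≠ b ∧ (C j a).Nonempty ∧ (C j b).Nonempty ∧ p = s(C j a, C j b)} with h𝒞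
  have hcov : (completeGraph n).IsSetJoinCover 𝒞 := by
    constructor
    · rintro p ⟨j, a, b, hab, hna, hnb, rfl⟩ K hK
      rcases Sym2.mem_iff.1 hK with rfl | rfl
      · exact hna
      · exact hnb
    · intro u v
      constructor
      · intro huv
        have huv' : u ≠ v := completeGraph_adj.1 huv
        have hne : ∃ j, c u j ≠ c v j := by
          by_contra h
          push_neg at h
          exact huv' (c.injective (funext h))
        obtain ⟨j, hj⟩ := hne
        exact ⟨s(C j (c u j), C j (c v j)),
          ⟨j, _, _, hj, ⟨u, rfl⟩, ⟨v, rfl⟩, rfl⟩,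
          C j (c u j), C j (c v j), rfl, rfl, rfl⟩
      · rintro ⟨p, ⟨j, a, b, hab, _, _, rfl⟩, K, L, hpe, hu, hv⟩
        refine completeGraph_adj.2 ?_
        rcases Sym2.eq_iff.1 hpe with ⟨hK, hL⟩ | ⟨hK, hL⟩
        · subst hK; subst hL
          intro h
          subst h
          exact hab ((hu : c u j = a).symm.trans (hv : c u j = b))
        · subst hK; subst hL
          intro h
          subst h
          exact hab ((hv : c u j = a).symm.trans (hu : c u j = b))
  have horder : coverOrder 𝒞 ≤ ∑ j, k j := by
    have hsub : comps 𝒞 ⊆ Set.range (fun x : (Σ j : Fin t, Fin (k j)) => C x.1 x.2) := by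
      rintro K ⟨p, ⟨j, a, b, hab, _, _, rfl⟩, hKp⟩
      rcases Sym2.mem_iff.1 hKp with rfl | rfl
      · exact ⟨⟨j, a⟩, rfl⟩
      · exact ⟨⟨j, b⟩, rfl⟩
    calc coverOrder 𝒞 = (comps 𝒞).ncard := rfl
      _ ≤ (Set.range (fun x : (Σ j : Fin t, Fin (k j)) => C x.1 x.2)).ncard :=
          Set.ncard_le_ncard hsub (Set.toFinite _)
      _ = ((fun x : (Σ j : Fin t, Fin (k j)) => C x.1 x.2) '' Set.univ).ncard := by
          rw [Set.image_univ]
      _ ≤ (Set.univ : Set (Σ j : Fin t, Fin (k j))).ncard :=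
          Set.ncard_image_le Set.finite_univ
      _ = Fintype.card (Σ j : Fin t, Fin (k j)) := by
          rw [Set.ncard_univ, Nat.card_eq_fintype_card]
      _ = ∑ j, k j := by simp [Fintype.card_sigma]
  exact ⟨coverOrder 𝒞, ⟨𝒞, hcov, rfl⟩, horder⟩

open STAux in
lemma st_eq_of {n m : ℕ} (hn : 2 ≤ n)
    (h1 : ∀ j, j < m → fP j < n)
    (hex : ∃ c ∈ {m' : ℕ | ∃ 𝒞 : Set (Sym2 (Set (Fin n))),
      (completeGraph n).IsSetJoinCover 𝒞 ∧ coverOrder 𝒞 = m'}, c ≤ m) :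
    (completeGraph n).st = m := by
  set SS := {m' : ℕ | ∃ 𝒞 : Set (Sym2 (Set (Fin n))),
    (completeGraph n).IsSetJoinCover 𝒞 ∧ coverOrder 𝒞 = m'} with hSS
  have hst : (completeGraph n).st = sInf SS := rfl
  obtain ⟨c0, hc0, hc0m⟩ := hex
  have hne : SS.Nonempty := ⟨c0, hc0⟩
  obtain ⟨𝒞, hcov, hord⟩ := Nat.sInf_mem hne
  have hlow := lower_bound hn 𝒞 hcov
  rw [hord] at hlow
  have hle : sInf SS ≤ m := le_trans (Nat.sInf_le hc0) hc0m
  rw [hst]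
  rcases lt_or_ge (sInf SS) m with hlt | hge
  · exact absurd hlow (by have := h1 _ hlt; omega)
  · omega

/-- For the complete loopless graph `Kₙ` (`n ≥ 2`):
`st₊(Kₙ) = 3i` if `2·3^{i−1} < n ≤ 3^i`, `st₊(Kₙ) = 3i + 1` if `3^i < n ≤ 4·3^{i−1}`,
and `st₊(Kₙ) = 3i + 2` if `4·3^{i−1} < n ≤ 2·3^i`.  (The inequalities involving
`3^{i−1}` are written multiplied through by `3` to avoid natural subtraction.) -/
theorem st_completeGraph (n i : ℕ) (hn : 2 ≤ n) :
    (2 * 3 ^ i < 3 * n ∧ n ≤ 3 ^ i → (completeGraph n).st = 3 * i) ∧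
    (3 ^ i < n ∧ 3 * n ≤ 4 * 3 ^ i → (completeGraph n).st = 3 * i + 1) ∧
    (4 * 3 ^ i < 3 * n ∧ n ≤ 2 * 3 ^ i → (completeGraph n).st = 3 * i + 2) := by
  refine ⟨?_, ?_, ?_⟩
  · rintro ⟨ha, hb⟩
    obtain ⟨i', rfl⟩ : ∃ i', i = i' + 1 := by
      cases i with
      | zero => exfalso; simp at hb; omega
      | succ i' => exact ⟨i', rfl⟩
    apply st_eq_of hn
    · intro j hj
      have h1 : STAux.fP j ≤ STAux.fP (3*i'+2) := STAux.fP_mono (by omega)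
      have h2 : STAux.fP (3*i'+2) = 2*3^i' := STAux.f32 i'
      have hp : (3:ℕ)^(i'+1) = 3*3^i' := by ring
      rw [hp] at ha
      omega
    · obtain ⟨c0, hc0, hle⟩ := upper_bound (n := n) (fun _ : Fin (i'+1) => (3:ℕ))
        (by simpa [Finset.prod_const] using hb)
      refine ⟨c0, hc0, ?_⟩
      have hs : (∑ _j : Fin (i'+1), (3:ℕ)) = 3*(i'+1) := by
        rw [Finset.sum_const]
        simp [mul_comm]
      omega
  · rintro ⟨ha, hb⟩
    obtain ⟨i', rfl⟩ : ∃ i', i = i' + 1 := by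
      cases i with
      | zero => exfalso; simp at hb; omega
      | succ i' => exact ⟨i', rfl⟩
    rw [show 3*(i'+1)+1 = 3*i'+4 from by ring]
    apply st_eq_of hn
    · intro j hj
      have h1 : STAux.fP j ≤ STAux.fP (3*(i'+1)) := STAux.fP_mono (by omega)
      have h2 : STAux.fP (3*(i'+1)) = 3^(i'+1) := STAux.f30 (i'+1)
      omega
    · obtain ⟨c0, hc0, hle⟩ := upper_bound (n := n) (Fin.cons 4 (fun _ : Fin i' => (3:ℕ)))
        (by
          rw [Fin.prod_cons, Finset.prod_const]
          have hp : (3:ℕ)^(i'+1) = 3*3^i' := by ring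
          rw [hp] at hb
          simp only [Finset.card_univ, Fintype.card_fin]
          omega)
      refine ⟨c0, hc0, ?_⟩
      have hs : (∑ j, (Fin.cons 4 (fun _ : Fin i' => (3:ℕ))) j) = 3*i'+4 := by
        rw [Fin.sum_cons, Finset.sum_const]
        simp only [Finset.card_univ, Fintype.card_fin, smul_eq_mul]
        omega
      omega
  · rintro ⟨ha, hb⟩
    apply st_eq_of hn
    · intro j hj
      have h1 : STAux.fP j ≤ STAux.fP (3*i+1) := STAux.fP_mono (by omega)
      have h2 : STAux.fP (3*i+1) < n := by
        cases i with
        | zero =>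
          have h3 : STAux.fP (3*0+1) = 1 := rfl
          omega
        | succ i' =>
          have h3 : STAux.fP (3*(i'+1)+1) = 4*3^i' := by
            rw [show 3*(i'+1)+1 = 3*i'+4 from by ring]
            exact STAux.f31 i'
          have hp : (3:ℕ)^(i'+1) = 3*3^i' := by ring
          rw [hp] at ha
          omega
      omega
    · obtain ⟨c0, hc0, hle⟩ := upper_bound (n := n) (Fin.cons 2 (fun _ : Fin i => (3:ℕ)))
        (by
          rw [Fin.prod_cons, Finset.prod_const]
          simp only [Finset.card_univ, Fintype.card_fin]
          omega)
      refine ⟨c0, hc0, ?_⟩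
      have hs : (∑ j, (Fin.cons 2 (fun _ : Fin i => (3:ℕ))) j) = 3*i+2 := by
        rw [Fin.sum_cons, Finset.sum_const]
        simp only [Finset.card_univ, Fintype.card_fin, smul_eq_mul]
        omega
      omega


end LGraph
end

section
/- Let m, n ∈ ℕ with n < m and st_+(K_n) = st_+(K_m), and let 𝒞 be an optimal set-join cover of K_m. Then every component K ∈ V(𝒞) satisfies |K| > m − n. -/
open Matrix

namespace LGraph

variable {V W : Type*}

/-- Pulling back a set-join cover of `K_b` along an injection `Fin a → Fin b`
gives a set-join cover of `K_a`. -/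
lemma pullback_cover {a b : ℕ} (f : Fin a → Fin b) (hf : Function.Injective f)
    (𝒟 : Set (Sym2 (Set (Fin b)))) (h : (completeGraph b).IsSetJoinCover 𝒟) :
    (completeGraph a).IsSetJoinCover
      (Sym2.map (f ⁻¹' ·) '' {p ∈ 𝒟 | ∀ K ∈ p, (f ⁻¹' K).Nonempty}) := by
  constructor
  · rintro p' ⟨p, ⟨hp, hne⟩, rfl⟩ K hK
    obtain ⟨K0, hK0, rfl⟩ := Sym2.mem_map.mp hK
    exact hne K0 hK0
  · intro u v
    constructor
    · intro huv
      have hb : (completeGraph b).Adj (f u) (f v) := fun e => huv (hf e)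
      obtain ⟨p, hp, K, L, rfl, hu, hv⟩ := (h.2 _ _).mp hb
      refine ⟨Sym2.map (f ⁻¹' ·) s(K, L), ⟨s(K, L), ⟨hp, ?_⟩, rfl⟩,
        f ⁻¹' K, f ⁻¹' L, by rw [Sym2.map_pair_eq], hu, hv⟩
      intro A hA
      rcases Sym2.mem_iff.mp hA with rfl | rfl
      · exact ⟨u, hu⟩
      · exact ⟨v, hv⟩
    · rintro ⟨p', ⟨p, ⟨hp, -⟩, rfl⟩, A, B, hAB, hu, hv⟩
      induction p using Sym2.ind with
      | _ K L =>
        rw [Sym2.map_pair_eq] at hAB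
        have hb : (completeGraph b).Adj (f u) (f v) := by
          rcases Sym2.eq_iff.mp hAB with ⟨hA, hB⟩ | ⟨hA, hB⟩
          · subst hA; subst hB
            exact (h.2 _ _).mpr ⟨s(K, L), hp, K, L, rfl, hu, hv⟩
          · subst hA; subst hB
            exact (h.2 _ _).mpr ⟨s(K, L), hp, L, K, Sym2.eq_swap, hu, hv⟩
        intro e
        exact hb (congrArg f e)

/-- Let `n < m` with `st₊(Kₙ) = st₊(K_m)`, and let `𝒞` be an optimal
set-join cover of `K_m`.  Then every component `K ∈ V(𝒞)` satisfies `|K| > m − n`. -/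
theorem component_card_of_optimal_complete (m n : ℕ) (hnm : n < m)
    (hst : (completeGraph n).st = (completeGraph m).st)
    (𝒞 : Set (Sym2 (Set (Fin m)))) (hopt : (completeGraph m).IsOptimalCover 𝒞) :
    ∀ K ∈ comps 𝒞, m - n < K.ncard := by
  intro K hK
  by_contra hle
  push_neg at hle
  obtain ⟨hcov, hord⟩ := hopt
  -- the complement of `K` has at least `n` elements
  have hcompl : n ≤ (Kᶜ : Set (Fin m)).ncard := by
    have h1 := Set.ncard_add_ncard_compl K
    have h2 : Nat.card (Fin m) = m := by
      rw [Nat.card_eq_fintype_card, Fintype.card_fin]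
    omega
  -- an injection `Fin n → Fin m` avoiding `K`
  have : Fintype ↥(Kᶜ : Set (Fin m)) := Fintype.ofFinite _
  have hcard : Fintype.card (Fin n) ≤ Fintype.card ↥(Kᶜ : Set (Fin m)) := by
    rw [Fintype.card_fin, ← Nat.card_eq_fintype_card, Nat.card_coe_set_eq]
    exact hcompl
  obtain ⟨g⟩ := Function.Embedding.nonempty_of_card_le hcard
  set f : Fin n → Fin m := fun i => (g i : Fin m) with hfdef
  have hf : Function.Injective f := by
    intro i j h
    exact g.injective (Subtype.val_injective h)
  have hfK : f ⁻¹' K = ∅ := by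
    ext i
    simp only [Set.mem_preimage, Set.mem_empty_iff_false, iff_false]
    exact (g i).2
  -- the pulled-back cover
  set 𝒞' : Set (Sym2 (Set (Fin n))) :=
    Sym2.map (f ⁻¹' ·) '' {p ∈ 𝒞 | ∀ A ∈ p, (f ⁻¹' A).Nonempty} with h𝒞'
  have hcov' : (completeGraph n).IsSetJoinCover 𝒞' := pullback_cover f hf 𝒞 hcov
  have hsub : comps 𝒞' ⊆ (f ⁻¹' ·) '' (comps 𝒞 \ {K}) := by
    rintro A ⟨p', hp'mem, hA⟩
    obtain ⟨p, ⟨hp, hne⟩, rfl⟩ := hp'mem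
    obtain ⟨A0, hA0, rfl⟩ := Sym2.mem_map.mp hA
    refine ⟨A0, ⟨⟨p, hp, hA0⟩, ?_⟩, rfl⟩
    intro hmem
    rw [Set.mem_singleton_iff] at hmem
    subst hmem
    obtain ⟨x, hx⟩ := hne A0 hA0
    rw [hfK] at hx
    exact hx
  have hfinC : (comps 𝒞).Finite := Set.toFinite _
  have hfinD : (comps 𝒞 \ {K}).Finite := hfinC.diff
  have h1 : (completeGraph n).st ≤ coverOrder 𝒞' := Nat.sInf_le ⟨𝒞', hcov', rfl⟩
  have h2 : coverOrder 𝒞' ≤ (comps 𝒞 \ {K}).ncard := by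
    calc coverOrder 𝒞' = (comps 𝒞').ncard := rfl
      _ ≤ ((f ⁻¹' ·) '' (comps 𝒞 \ {K})).ncard :=
          Set.ncard_le_ncard hsub (hfinD.image _)
      _ ≤ (comps 𝒞 \ {K}).ncard := Set.ncard_image_le hfinD
  have h3 : (comps 𝒞 \ {K}).ncard = (comps 𝒞).ncard - 1 :=
    Set.ncard_diff_singleton_of_mem hK
  have h4 : 0 < (comps 𝒞).ncard := (Set.ncard_pos hfinC).mpr ⟨K, hK⟩
  have h5 : coverOrder 𝒞 = (comps 𝒞).ncard := rfl
  omega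

end LGraph
end
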